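/- arXiv:2112.02928 — 6 statements merged into one kernel-verified Lean document; each statement's English description precedes it below -/
import Mathlib

section
/- Let p > 0, ν ∈ ℂ, and x > 0. Then the function t ↦ t^(ν−1) · exp(−t^p − x/t) is integrable on (0, ∞), i.e. Krätzel's integral F_{p,ν}(x) is an absolutely convergent integral. -/
open MeasureTheory Set

/-- Krätzel's integral: for `p > 0`, `ν ∈ ℂ` and `x > 0`, the integrand
`t ↦ t^(ν-1) · exp(-t^p - x/t)` is integrable on `(0, ∞)`. -/
theorem kratzel_integrable (p : ℝ) (hp : 0 < p) (ν : ℂ) (x : ℝ) (hx : 0 < x) :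
    IntegrableOn
      (fun t : ℝ => (t : ℂ) ^ (ν - 1) * Complex.exp (-((t ^ p : ℝ) : ℂ) - ((x / t : ℝ) : ℂ)))
      (Ioi 0) := by
  set f : ℝ → ℂ :=
    fun t : ℝ => (t : ℂ) ^ (ν - 1) * Complex.exp (-((t ^ p : ℝ) : ℂ) - ((x / t : ℝ) : ℂ))
  set s : ℝ := ν.re - 1 with hs
  have hnorm : ∀ t : ℝ, 0 < t → ‖f t‖ = t ^ s * Real.exp (-(t ^ p) - x / t) := by
    intro t ht
    have h1 : ‖(t : ℂ) ^ (ν - 1)‖ = t ^ s := by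
      rw [Complex.norm_cpow_eq_rpow_re_of_pos ht]
      simp [hs, Complex.sub_re]
    have h2 : ‖Complex.exp (-((t ^ p : ℝ) : ℂ) - ((x / t : ℝ) : ℂ))‖
        = Real.exp (-(t ^ p) - x / t) := by
      rw [Complex.norm_exp]
      simp
    simp only [f, norm_mul, h1, h2]
  have hcont : ContinuousOn f (Ioi 0) := by
    intro t ht
    have ht' : (0 : ℝ) < t := ht
    apply ContinuousAt.continuousWithinAt
    apply ContinuousAt.mul
    · exact Complex.continuousAt_ofReal_cpow_const t (ν - 1) (Or.inr ht'.ne')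
    · apply Complex.continuous_exp.continuousAt.comp
      apply ContinuousAt.sub
      · exact (Complex.continuous_ofReal.continuousAt.comp
          (Real.continuousAt_rpow_const t p (Or.inl ht'.ne'))).neg
      · exact Complex.continuous_ofReal.continuousAt.comp
          ((continuousAt_const.div continuousAt_id ht'.ne'))
  have hmeas : AEStronglyMeasurable f (volume.restrict (Ioi 0)) :=
    hcont.aestronglyMeasurable measurableSet_Ioi
  have hunion : Ioc (0:ℝ) 1 ∪ Ioi 1 = Ioi 0 := Ioc_union_Ioi_eq_Ioi zero_le_one
  rw [← hunion, integrableOn_union]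
  constructor
  · -- near 0 : bound by the constant n! / x ^ n
    set n : ℕ := ⌈-s⌉₊ with hn
    have hns : -s ≤ (n : ℝ) := Nat.le_ceil _
    refine Integrable.mono' (g := fun _ : ℝ => (n.factorial : ℝ) / x ^ n)
      (integrableOn_const measure_Ioc_lt_top.ne)
      (hmeas.mono_set (fun t ht => ht.1)) ?_
    filter_upwards [ae_restrict_mem measurableSet_Ioc] with t ht
    obtain ⟨ht0, ht1⟩ := ht
    rw [hnorm t ht0]
    have hb1 : t ^ s ≤ t ^ (-(n : ℝ)) :=
      Real.rpow_le_rpow_of_exponent_ge ht0 ht1 (by linarith)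
    have hxt : 0 < x / t := div_pos hx ht0
    have hexp1 : Real.exp (-(t ^ p) - x / t) ≤ Real.exp (-(x / t)) := by
      apply Real.exp_le_exp.2
      have : 0 ≤ t ^ p := Real.rpow_nonneg ht0.le p
      linarith
    have hexp2 : Real.exp (-(x / t)) ≤ (n.factorial : ℝ) * (t / x) ^ n := by
      have h := Real.pow_div_factorial_le_exp (x := x / t) hxt.le n
      rw [Real.exp_neg]
      rw [div_le_iff₀ (by positivity)] at h
      rw [inv_le_iff_one_le_mul₀ (Real.exp_pos _)]
      calc (1:ℝ) = (x / t) ^ n * (t / x) ^ n := by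
            rw [← mul_pow, div_mul_div_comm, mul_comm x t, div_self (by positivity), one_pow]
        _ ≤ Real.exp (x / t) * (n.factorial : ℝ) * (t / x) ^ n := by
            apply mul_le_mul_of_nonneg_right h (by positivity)
        _ = (n.factorial : ℝ) * (t / x) ^ n * Real.exp (x / t) := by ring
    calc t ^ s * Real.exp (-(t ^ p) - x / t)
        ≤ t ^ (-(n : ℝ)) * ((n.factorial : ℝ) * (t / x) ^ n) := by
          apply mul_le_mul hb1 (hexp1.trans hexp2) (Real.exp_pos _).le
            (Real.rpow_nonneg ht0.le _)
      _ = (n.factorial : ℝ) / x ^ n := by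
          rw [div_pow, Real.rpow_neg ht0.le, Real.rpow_natCast]
          field_simp
  · -- near ∞ : bound by n! * t ^ (-2)
    set n : ℕ := ⌈(s + 2) / p⌉₊ with hn
    have hns : (s + 2) / p ≤ (n : ℝ) := Nat.le_ceil _
    have hns' : s + 2 ≤ (n : ℝ) * p := by
      rw [div_le_iff₀ hp] at hns; linarith
    have hint : IntegrableOn (fun t : ℝ => (n.factorial : ℝ) * t ^ (-2 : ℝ)) (Ioi 1) :=
      (integrableOn_Ioi_rpow_of_lt (by norm_num) one_pos).const_mul _
    refine Integrable.mono' hint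
      (hmeas.mono_set (fun t (ht : t ∈ Ioi (1:ℝ)) => (lt_trans one_pos ht : (0:ℝ) < t))) ?_
    filter_upwards [ae_restrict_mem measurableSet_Ioi] with t ht
    have ht0 : (0:ℝ) < t := lt_trans one_pos ht
    rw [hnorm t ht0]
    have hxt : 0 ≤ x / t := (div_pos hx ht0).le
    have htp : 0 ≤ t ^ p := Real.rpow_nonneg ht0.le p
    have hexp1 : Real.exp (-(t ^ p) - x / t) ≤ Real.exp (-(t ^ p)) := by
      apply Real.exp_le_exp.2; linarith
    have hexp2 : Real.exp (-(t ^ p)) ≤ (n.factorial : ℝ) * t ^ (-((n : ℝ) * p)) := by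
      have h := Real.pow_div_factorial_le_exp (x := t ^ p) htp n
      have key2 : t ^ ((n : ℝ) * p) / (n.factorial : ℝ) ≤ Real.exp (t ^ p) := by
        calc t ^ ((n : ℝ) * p) / (n.factorial : ℝ)
            = (t ^ p) ^ n / (n.factorial : ℝ) := by
              rw [← Real.rpow_natCast (t ^ p) n, ← Real.rpow_mul ht0.le, mul_comm]
          _ ≤ Real.exp (t ^ p) := h
      have hfac : (0 : ℝ) < (n.factorial : ℝ) := by positivity
      rw [div_le_iff₀ hfac] at key2
      rw [Real.exp_neg, inv_le_iff_one_le_mul₀ (Real.exp_pos _)]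
      have htnp : (0 : ℝ) < t ^ ((n : ℝ) * p) := Real.rpow_pos_of_pos ht0 _
      calc (1 : ℝ) = t ^ ((n : ℝ) * p) * (t ^ ((n : ℝ) * p))⁻¹ := by
            rw [mul_inv_cancel₀ htnp.ne']
        _ ≤ Real.exp (t ^ p) * (n.factorial : ℝ) * (t ^ ((n : ℝ) * p))⁻¹ :=
            mul_le_mul_of_nonneg_right key2 (by positivity)
        _ = (n.factorial : ℝ) * t ^ (-((n : ℝ) * p)) * Real.exp (t ^ p) := by
            rw [Real.rpow_neg ht0.le]; ring
    have hb1 : t ^ s * (t ^ (-((n : ℝ) * p))) = t ^ (s - (n:ℝ) * p) := by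
      rw [← Real.rpow_add ht0]; ring_nf
    have hb2 : t ^ (s - (n:ℝ) * p) ≤ t ^ (-2 : ℝ) :=
      Real.rpow_le_rpow_of_exponent_le ht.le (by linarith)
    calc t ^ s * Real.exp (-(t ^ p) - x / t)
        ≤ t ^ s * ((n.factorial : ℝ) * t ^ (-((n : ℝ) * p))) := by
          apply mul_le_mul_of_nonneg_left (hexp1.trans hexp2) (Real.rpow_nonneg ht0.le _)
      _ = (n.factorial : ℝ) * (t ^ s * t ^ (-((n : ℝ) * p))) := by ring
      _ ≤ (n.factorial : ℝ) * t ^ (-2 : ℝ) := by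
          rw [hb1]; exact mul_le_mul_of_nonneg_left hb2 (by positivity)
end

section
/- Let p > 0 and ν ∈ ℂ, and set ψ(τ) = τ^p / p + 1/τ for τ > 0. Then for every complex X with Re(X) > 0 the function τ ↦ τ^(ν−1) exp(−X ψ(τ)) is integrable on (0, ∞), and the function G(X) = ∫₀^∞ τ^(ν−1) exp(−X ψ(τ)) dτ is holomorphic (complex differentiable) on the half-plane {X ∈ ℂ : Re(X) > 0}. -/
open MeasureTheory Set Real

lemma kr_exp_neg_le (n : ℕ) {x : ℝ} (hx : 0 < x) :
    Real.exp (-x) ≤ (Nat.factorial n : ℝ) * (x ^ n)⁻¹ := by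
  have hxn : (0:ℝ) < x ^ n := by positivity
  rw [Real.exp_neg, inv_eq_one_div, inv_eq_one_div, mul_one_div,
    div_le_div_iff₀ (Real.exp_pos x) hxn]
  have h := Real.pow_div_factorial_le_exp (x := x) hx.le n
  rw [div_le_iff₀ (by positivity)] at h
  nlinarith [Real.exp_pos x, hxn]

lemma kr_mul_exp_neg_le {t : ℝ} (ht : 0 ≤ t) : t * Real.exp (-t) ≤ 1 := by
  have he := Real.exp_pos t
  have h := Real.add_one_le_exp t
  rw [Real.exp_neg, ← div_eq_mul_inv, div_le_one he]
  linarith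

lemma kr_psi_cont (p : ℝ) : ContinuousOn (fun τ : ℝ => τ ^ p / p + 1 / τ) (Ioi 0) := by
  have h1 : ContinuousOn (fun τ : ℝ => τ ^ p) (Ioi 0) :=
    fun τ hτ => (Real.continuousAt_rpow_const τ p (Or.inl (ne_of_gt hτ))).continuousWithinAt
  exact (h1.div_const p).add (continuousOn_const.div continuousOn_id fun τ hτ => ne_of_gt hτ)

lemma kr_cont (p a c : ℝ) :
    ContinuousOn (fun τ : ℝ => τ ^ a * Real.exp (-c * (τ ^ p / p + 1 / τ))) (Ioi 0) := by
  have h0 : ContinuousOn (fun τ : ℝ => τ ^ a) (Ioi 0) :=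
    fun τ hτ => (Real.continuousAt_rpow_const τ a (Or.inl (ne_of_gt hτ))).continuousWithinAt
  exact h0.mul (Real.continuous_exp.comp_continuousOn (continuousOn_const.mul (kr_psi_cont p)))

lemma kr_aux_int (p : ℝ) (hp : 0 < p) (a c : ℝ) (hc : 0 < c) :
    IntegrableOn (fun τ : ℝ => τ ^ a * Real.exp (-c * (τ ^ p / p + 1 / τ))) (Ioi 0) := by
  have hmeas : AEStronglyMeasurable (fun τ : ℝ => τ ^ a * Real.exp (-c * (τ ^ p / p + 1 / τ)))
      (volume.restrict (Ioi (0:ℝ))) :=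
    (kr_cont p a c).aestronglyMeasurable measurableSet_Ioi
  rw [← Ioc_union_Ioi_eq_Ioi (zero_le_one (α := ℝ))]
  apply IntegrableOn.union
  · -- on (0, 1]
    set n : ℕ := ⌈-a⌉₊ + 1 with hn_def
    have hn : -1 < a + n := by
      have h := Nat.le_ceil (-a)
      have : ((n : ℝ)) = (⌈-a⌉₊ : ℝ) + 1 := by push_cast [hn_def]; ring
      rw [this]; linarith
    have hint : IntegrableOn (fun τ : ℝ => ((Nat.factorial n : ℝ) / c ^ n) * τ ^ (a + n))
        (Ioc (0:ℝ) 1) :=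
      ((intervalIntegral.intervalIntegrable_rpow' hn).1).const_mul _
    apply Integrable.mono' hint (hmeas.mono_set (Ioc_subset_Ioi_self.trans (by simp)))
    · filter_upwards [ae_restrict_mem measurableSet_Ioc] with τ hτ
      obtain ⟨hτ0, hτ1⟩ := hτ
      have hψ1 : 1 / τ ≤ τ ^ p / p + 1 / τ := le_add_of_nonneg_left (by positivity)
      have h1 : Real.exp (-c * (τ ^ p / p + 1 / τ)) ≤ Real.exp (-(c / τ)) := by
        apply Real.exp_le_exp.2
        rw [neg_mul, neg_le_neg_iff, div_eq_mul_one_div]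
        nlinarith [hψ1]
      have h2 : Real.exp (-(c / τ)) ≤ (Nat.factorial n : ℝ) * ((c / τ) ^ n)⁻¹ :=
        kr_exp_neg_le n (by positivity)
      have h3 : ((c / τ) ^ n)⁻¹ = τ ^ n / c ^ n := by
        rw [div_pow]; field_simp
      have hτa : (0:ℝ) < τ ^ a := Real.rpow_pos_of_pos hτ0 a
      simp only [norm_mul, Real.norm_eq_abs, Real.abs_exp, abs_of_pos hτa, abs_of_pos hτ0]
      calc τ ^ a * Real.exp (-c * (τ ^ p / p + 1 / τ))
          ≤ τ ^ a * ((Nat.factorial n : ℝ) * (τ ^ n / c ^ n)) := by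
            rw [← h3]; exact mul_le_mul_of_nonneg_left (h1.trans h2) hτa.le
        _ = (Nat.factorial n : ℝ) / c ^ n * (τ ^ a * τ ^ (n:ℝ)) := by
            rw [Real.rpow_natCast]; ring
        _ = (Nat.factorial n : ℝ) / c ^ n * τ ^ (a + n) := by
            rw [← Real.rpow_add hτ0]
  · -- on (1, ∞)
    set m : ℕ := ⌈(a + 1) / p⌉₊ + 1 with hm_def
    have hm : a - p * m < -1 := by
      have h := Nat.le_ceil ((a + 1) / p)
      have h2 : (a + 1) / p * p ≤ (⌈(a + 1) / p⌉₊ : ℝ) * p :=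
        mul_le_mul_of_nonneg_right h hp.le
      rw [div_mul_cancel₀ _ hp.ne'] at h2
      have : ((m : ℝ)) = (⌈(a + 1) / p⌉₊ : ℝ) + 1 := by push_cast [hm_def]; ring
      rw [this]; nlinarith
    have hint : IntegrableOn
        (fun τ : ℝ => ((Nat.factorial m : ℝ) / (c / p) ^ m) * τ ^ (a - p * m))
        (Ioi (1:ℝ)) :=
      (integrableOn_Ioi_rpow_of_lt hm one_pos).const_mul _
    apply Integrable.mono' hint (hmeas.mono_set (Ioi_subset_Ioi zero_le_one))
    · filter_upwards [ae_restrict_mem measurableSet_Ioi] with τ hτ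
      have hτ0 : (0:ℝ) < τ := lt_trans one_pos hτ
      have hτp : (0:ℝ) < τ ^ p := Real.rpow_pos_of_pos hτ0 p
      have h1 : Real.exp (-c * (τ ^ p / p + 1 / τ)) ≤ Real.exp (-(c / p * τ ^ p)) := by
        apply Real.exp_le_exp.2
        rw [neg_mul, neg_le_neg_iff]
        have : (0:ℝ) < 1 / τ := by positivity
        have hcp : c / p * τ ^ p = c * (τ ^ p / p) := by ring
        nlinarith
      have h2 : Real.exp (-(c / p * τ ^ p)) ≤
          (Nat.factorial m : ℝ) * ((c / p * τ ^ p) ^ m)⁻¹ :=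
        kr_exp_neg_le m (by positivity)
      have h3 : ((c / p * τ ^ p) ^ m)⁻¹ = ((c/p) ^ m)⁻¹ * (τ ^ (p * m))⁻¹ := by
        rw [mul_pow, ← Real.rpow_natCast (τ ^ p) m, ← Real.rpow_mul hτ0.le, mul_inv]
      have hτa : (0:ℝ) < τ ^ a := Real.rpow_pos_of_pos hτ0 a
      simp only [norm_mul, Real.norm_eq_abs, Real.abs_exp, abs_of_pos hτa, abs_of_pos hτ0]
      calc τ ^ a * Real.exp (-c * (τ ^ p / p + 1 / τ))
          ≤ τ ^ a * ((Nat.factorial m : ℝ) * (((c/p) ^ m)⁻¹ * (τ ^ (p * m))⁻¹)) := by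
            rw [← h3]; exact mul_le_mul_of_nonneg_left (h1.trans h2) hτa.le
        _ = (Nat.factorial m : ℝ) / (c / p) ^ m * (τ ^ a * (τ ^ (p * m))⁻¹) := by ring
        _ = (Nat.factorial m : ℝ) / (c / p) ^ m * τ ^ (a - p * m) := by
            rw [Real.rpow_sub hτ0]; ring

lemma kr_norm_eq (ν X : ℂ) {τ : ℝ} (hτ : 0 < τ) (r : ℝ) :
    ‖(τ : ℂ) ^ (ν - 1) * Complex.exp (-X * (r : ℂ))‖
      = τ ^ (ν - 1).re * Real.exp (-X.re * r) := by
  rw [norm_mul,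
    Complex.norm_cpow_eq_rpow_re_of_pos hτ, Complex.norm_exp]
  congr 2
  simp [Complex.mul_re]

lemma kr_cpow_cont (ν : ℂ) : ContinuousOn (fun τ : ℝ => (τ : ℂ) ^ (ν - 1)) (Ioi 0) := by
  apply ContinuousOn.cpow_const (Complex.continuous_ofReal.continuousOn)
  exact fun τ hτ => Complex.ofReal_mem_slitPlane.2 hτ

lemma kr_contC (ψ : ℝ → ℝ) (hψc : ContinuousOn ψ (Ioi 0)) (ν X : ℂ) :
    ContinuousOn (fun τ : ℝ => (τ : ℂ) ^ (ν - 1) * Complex.exp (-X * (ψ τ : ℂ))) (Ioi 0) :=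
  (kr_cpow_cont ν).mul (Complex.continuous_exp.comp_continuousOn
    (continuousOn_const.mul (Complex.continuous_ofReal.comp_continuousOn hψc)))

lemma kr_contC' (ψ : ℝ → ℝ) (hψc : ContinuousOn ψ (Ioi 0)) (ν X : ℂ) :
    ContinuousOn (fun τ : ℝ =>
      (τ : ℂ) ^ (ν - 1) * (Complex.exp (-X * (ψ τ : ℂ)) * -(ψ τ : ℂ))) (Ioi 0) :=
  (kr_cpow_cont ν).mul ((Complex.continuous_exp.comp_continuousOn
    (continuousOn_const.mul (Complex.continuous_ofReal.comp_continuousOn hψc))).mul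
    (Complex.continuous_ofReal.comp_continuousOn hψc).neg)

/-- For `p > 0`, `ν ∈ ℂ`, with `ψ(τ) = τ^p/p + 1/τ`: the integrand
`τ ↦ τ^(ν-1) exp(-X ψ(τ))` is integrable on `(0,∞)` for every `X` with `Re X > 0`,
and `G(X) = ∫₀^∞ τ^(ν-1) exp(-X ψ(τ)) dτ` is holomorphic on that half-plane. -/
theorem kratzel_G_holomorphic (p : ℝ) (hp : 0 < p) (ν : ℂ)
    (ψ : ℝ → ℝ) (hψ : ∀ τ : ℝ, ψ τ = τ ^ p / p + 1 / τ) :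
    (∀ X : ℂ, 0 < X.re →
      IntegrableOn (fun τ : ℝ => (τ : ℂ) ^ (ν - 1) * Complex.exp (-X * (ψ τ : ℂ))) (Ioi 0)) ∧
    DifferentiableOn ℂ
      (fun X : ℂ => ∫ τ in Ioi (0 : ℝ), (τ : ℂ) ^ (ν - 1) * Complex.exp (-X * (ψ τ : ℂ)))
      {X : ℂ | 0 < X.re} := by
  have hψc : ContinuousOn ψ (Ioi 0) :=
    (kr_psi_cont p).congr fun τ _ => hψ τ
  have hψpos : ∀ τ : ℝ, 0 < τ → 0 < ψ τ := by
    intro τ hτ; rw [hψ]; positivity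
  set b := (ν - 1).re with hb_def
  have hInt : ∀ X : ℂ, 0 < X.re →
      IntegrableOn (fun τ : ℝ => (τ : ℂ) ^ (ν - 1) * Complex.exp (-X * (ψ τ : ℂ))) (Ioi 0) := by
    intro X hX
    apply Integrable.mono' (kr_aux_int p hp b X.re hX)
      ((kr_contC ψ hψc ν X).aestronglyMeasurable measurableSet_Ioi)
    filter_upwards [ae_restrict_mem measurableSet_Ioi] with τ hτ
    rw [kr_norm_eq ν X hτ (ψ τ), hψ τ]
  refine ⟨hInt, fun X₀ hX₀ => ?_⟩
  have hX₀re : 0 < X₀.re := hX₀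
  set ε := X₀.re / 2 with hε_def
  have hε0 : 0 < ε := by positivity
  have key := hasDerivAt_integral_of_dominated_loc_of_deriv_le
    (μ := volume.restrict (Ioi (0:ℝ)))
    (F := fun X τ => (τ : ℂ) ^ (ν - 1) * Complex.exp (-X * (ψ τ : ℂ)))
    (F' := fun X τ => (τ : ℂ) ^ (ν - 1) * (Complex.exp (-X * (ψ τ : ℂ)) * -(ψ τ : ℂ)))
    (x₀ := X₀)
    (bound := fun τ => 2 / ε * (τ ^ b * Real.exp (-(ε/2) * (τ ^ p / p + 1 / τ))))
    (Metric.ball_mem_nhds X₀ hε0)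
    (Filter.Eventually.of_forall fun X =>
      (kr_contC ψ hψc ν X).aestronglyMeasurable measurableSet_Ioi)
    (hInt X₀ hX₀re)
    ((kr_contC' ψ hψc ν X₀).aestronglyMeasurable measurableSet_Ioi)
    ?_ ?_ ?_
  · exact key.2.differentiableAt.differentiableWithinAt
  · -- bound
    filter_upwards [ae_restrict_mem measurableSet_Ioi] with τ hτ
    intro X hX
    have hs := hψpos τ hτ
    have hXre : ε ≤ X.re := by
      have h1 : dist X X₀ < ε := Metric.mem_ball.1 hX
      have h2 : |(X - X₀).re| ≤ ‖X - X₀‖ := Complex.abs_re_le_norm _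
      rw [Complex.dist_eq] at h1
      have h3 : |X.re - X₀.re| < ε := by
        simpa [Complex.sub_re] using lt_of_le_of_lt h2 h1
      have := abs_lt.1 h3
      have : X₀.re - ε < X.re := by linarith [this.1]
      rw [hε_def] at *; linarith
    have hτb : (0:ℝ) < τ ^ b := Real.rpow_pos_of_pos hτ b
    have hnorm : ‖(τ : ℂ) ^ (ν - 1) * (Complex.exp (-X * (ψ τ : ℂ)) * -(ψ τ : ℂ))‖
        = τ ^ b * (Real.exp (-X.re * ψ τ) * ψ τ) := by
      rw [show (τ : ℂ) ^ (ν - 1) * (Complex.exp (-X * (ψ τ : ℂ)) * -(ψ τ : ℂ))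
          = ((τ : ℂ) ^ (ν - 1) * Complex.exp (-X * (ψ τ : ℂ))) * -(ψ τ : ℂ) by ring,
        norm_mul, kr_norm_eq ν X hτ (ψ τ), norm_neg, Complex.norm_real,
        Real.norm_eq_abs, abs_of_pos hs, mul_assoc]
    rw [hnorm, ← hψ τ]
    set s := ψ τ
    have hA : Real.exp (-X.re * s) ≤ Real.exp (-(ε * s)) := by
      apply Real.exp_le_exp.2; nlinarith
    have hsplit : Real.exp (-(ε * s)) = Real.exp (-(ε/2) * s) * Real.exp (-(ε/2) * s) := by
      rw [← Real.exp_add]; ring_nf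
    have h2 : s * Real.exp (-(ε/2) * s) ≤ 2 / ε := by
      have h := kr_mul_exp_neg_le (t := ε/2 * s) (by positivity)
      rw [show -(ε/2 * s) = -(ε/2) * s by ring] at h
      rw [le_div_iff₀ hε0]
      nlinarith
    have hApos : (0:ℝ) < Real.exp (-(ε/2) * s) := Real.exp_pos _
    have hchain : Real.exp (-X.re * s) * s ≤ 2 / ε * Real.exp (-(ε/2) * s) := by
      calc Real.exp (-X.re * s) * s ≤ Real.exp (-(ε * s)) * s := by nlinarith
        _ = (s * Real.exp (-(ε/2) * s)) * Real.exp (-(ε/2) * s) := by rw [hsplit]; ring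
        _ ≤ 2 / ε * Real.exp (-(ε/2) * s) := by nlinarith
    calc τ ^ b * (Real.exp (-X.re * s) * s)
        ≤ τ ^ b * (2 / ε * Real.exp (-(ε/2) * s)) :=
          mul_le_mul_of_nonneg_left hchain hτb.le
      _ = 2 / ε * (τ ^ b * Real.exp (-(ε/2) * s)) := by ring
  · -- bound integrable
    exact (kr_aux_int p hp b (ε/2) (by positivity)).const_mul _
  · -- differentiability in X for each τ
    apply Filter.Eventually.of_forall
    intro τ X _
    have h1 : HasDerivAt (fun X : ℂ => -X * (ψ τ : ℂ)) (-(ψ τ : ℂ)) X := by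
      simpa using ((hasDerivAt_id X).neg.mul_const ((ψ τ : ℂ)))
    exact (h1.cexp).const_mul ((τ : ℂ) ^ (ν - 1))
end

section
/- Let −1 ≤ p < 0 and let ν ∈ ℂ with Re(ν) < 0. Then, as x → +∞ through positive reals, F_{p,ν}(x) = Γ(−ν) x^ν − Γ(−p−ν) x^{ν+p} + O(x^{Re(ν)+2p}); i.e. the difference F_{p,ν}(x) − Γ(−ν)x^ν + Γ(−p−ν)x^{ν+p} is O(x^{Re(ν)+2p}) as x → +∞. -/
open MeasureTheory Set Filter Asymptotics

/-- Second-order Taylor bound for `exp(-u)` with `u ≥ 0`. -/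
private lemma exp_neg_taylor_bound {u : ℝ} (hu : 0 ≤ u) :
    Real.exp (-u) - 1 + u ≤ u ^ 2 / 2 := by
  have hd : ∀ v : ℝ, HasDerivAt (fun w : ℝ => w ^ 2 / 2 - w + 1 - Real.exp (-w))
      (v - 1 + Real.exp (-v)) v := by
    intro v
    have h2 : HasDerivAt (fun w : ℝ => Real.exp (-w)) (-Real.exp (-v)) v := by
      exact ((Real.hasDerivAt_exp (-v)).comp v (hasDerivAt_neg v)).congr_deriv (by simp)
    have h3 : HasDerivAt (fun w : ℝ => w ^ 2 / 2 - w + 1) (v - 1) v := by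
      have := (((hasDerivAt_pow 2 v).div_const 2).sub (hasDerivAt_id v)).add_const 1
      exact this.congr_deriv (by norm_num)
    exact (h3.sub h2).congr_deriv (by ring)
  have hmono : Monotone (fun w : ℝ => w ^ 2 / 2 - w + 1 - Real.exp (-w)) := by
    apply monotone_of_deriv_nonneg
    · exact fun v => (hd v).differentiableAt
    · intro v
      rw [(hd v).deriv]
      have := Real.add_one_le_exp (-v)
      linarith
  have h0 := hmono hu
  simp only [neg_zero, Real.exp_zero] at h0
  nlinarith [h0]

/-- Key Mellin computation: for `x > 0` and `Re s < 0`,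
`∫_{0}^{∞} t^{s-1} e^{-x/t} dt = Γ(-s) x^s`, together with integrability. -/
private lemma mellin_exp_div (x : ℝ) (hx : 0 < x) (s : ℂ) (hs : s.re < 0) :
    IntegrableOn (fun t : ℝ => (t : ℂ) ^ (s - 1) * Complex.exp (-((x / t : ℝ) : ℂ))) (Ioi 0)
      ∧ ∫ t in Ioi (0 : ℝ), (t : ℂ) ^ (s - 1) * Complex.exp (-((x / t : ℝ) : ℂ))
        = Complex.Gamma (-s) * (x : ℂ) ^ s := by
  set g : ℝ → ℂ := fun u => ((Real.exp (-u) : ℝ) : ℂ) with hg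
  have hres : 0 < (-s).re := by simpa using neg_pos.mpr hs
  -- convergence and value of the Mellin transform of `g` at `-s`
  have hgconv : MellinConvergent g (-s) := by
    have h := Complex.GammaIntegral_convergent hres
    refine h.congr_fun (fun t ht => ?_) measurableSet_Ioi
    simp [g, smul_eq_mul, mul_comm]
  have hgval : mellin g (-s) = Complex.Gamma (-s) := by
    rw [Complex.Gamma_eq_integral hres, Complex.GammaIntegral]
    simp only [mellin, smul_eq_mul]
    exact setIntegral_congr_fun measurableSet_Ioi fun t _ => mul_comm _ _
  -- composition with `t ↦ x * t`
  have hc3 : MellinConvergent (fun u : ℝ => g (x * u)) (-s) :=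
    (MellinConvergent.comp_mul_left hx).mpr hgconv
  have h3 : mellin (fun u : ℝ => g (x * u)) (-s) = (x : ℂ) ^ s * Complex.Gamma (-s) := by
    rw [mellin_comp_mul_left g (-s) hx, hgval, neg_neg, smul_eq_mul]
  -- composition with `t ↦ t ^ (-1)`
  have hdiv : s / ((-1 : ℝ) : ℂ) = -s := by push_cast; ring
  have hc2 : MellinConvergent (fun u : ℝ => g (x * u ^ (-1 : ℝ))) s := by
    have := (MellinConvergent.comp_rpow (f := fun u : ℝ => g (x * u)) (s := s)
      (show (-1 : ℝ) ≠ 0 by norm_num)).mpr (by rw [hdiv]; exact hc3)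
    exact this
  have h2 : mellin (fun u : ℝ => g (x * u ^ (-1 : ℝ))) s
      = mellin (fun u : ℝ => g (x * u)) (-s) := by
    have := mellin_comp_rpow (fun u : ℝ => g (x * u)) s (-1)
    rw [hdiv] at this
    simpa using this
  -- identify the integrand
  have hpt : ∀ t ∈ Ioi (0 : ℝ),
      (t : ℂ) ^ (s - 1) • g (x * t ^ (-1 : ℝ))
        = (t : ℂ) ^ (s - 1) * Complex.exp (-((x / t : ℝ) : ℂ)) := by
    intro t ht
    have h1 : t ^ (-1 : ℝ) = t⁻¹ := by
      rw [show (-1 : ℝ) = ((-1 : ℤ) : ℝ) by norm_num, Real.rpow_intCast]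
      simp
    rw [smul_eq_mul, h1, hg]
    congr 1
    rw [← div_eq_mul_inv]
    push_cast [Complex.ofReal_exp]
    ring_nf
  constructor
  · exact hc2.congr_fun hpt measurableSet_Ioi
  · have key : ∫ t in Ioi (0 : ℝ), (t : ℂ) ^ (s - 1) * Complex.exp (-((x / t : ℝ) : ℂ))
        = mellin (fun u : ℝ => g (x * u ^ (-1 : ℝ))) s := by
      rw [mellin]
      exact setIntegral_congr_fun measurableSet_Ioi fun t ht => (hpt t ht).symm
    rw [key, h2, h3, mul_comm]

/-- Real version: for `x > 0` and `r < 0`,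
`∫_{0}^{∞} t^{r-1} e^{-x/t} dt = Γ(-r) x^r`, together with integrability. -/
private lemma real_exp_div_integral (x : ℝ) (hx : 0 < x) (r : ℝ) (hr : r < 0) :
    IntegrableOn (fun t : ℝ => t ^ (r - 1) * Real.exp (-(x / t))) (Ioi 0)
      ∧ ∫ t in Ioi (0 : ℝ), t ^ (r - 1) * Real.exp (-(x / t))
        = Real.Gamma (-r) * x ^ r := by
  obtain ⟨hI, hV⟩ := mellin_exp_div x hx (r : ℂ) (by simpa using hr)
  have hpt : ∀ t ∈ Ioi (0 : ℝ),
      ((t : ℂ) ^ ((r : ℂ) - 1) * Complex.exp (-((x / t : ℝ) : ℂ)))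
        = ((t ^ (r - 1) * Real.exp (-(x / t)) : ℝ) : ℂ) := by
    intro t ht
    rw [Complex.ofReal_mul, Complex.ofReal_cpow ht.le, Complex.ofReal_exp]
    push_cast
    ring_nf
  constructor
  · have h1 : IntegrableOn (fun t : ℝ => ((t ^ (r - 1) * Real.exp (-(x / t)) : ℝ) : ℂ))
        (Ioi 0) := hI.congr_fun hpt measurableSet_Ioi
    have h2 : IntegrableOn (fun t : ℝ => ‖((t ^ (r - 1) * Real.exp (-(x / t)) : ℝ) : ℂ)‖)
        (Ioi 0) := h1.norm
    refine IntegrableOn.congr_fun h2 (fun t ht => ?_) measurableSet_Ioi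
    simp only [Complex.norm_real, Real.norm_eq_abs]
    rw [abs_of_nonneg (mul_nonneg (Real.rpow_nonneg (le_of_lt ht) _) (Real.exp_pos _).le)]
  · have h1 : ∫ t in Ioi (0 : ℝ), ((t ^ (r - 1) * Real.exp (-(x / t)) : ℝ) : ℂ)
        = Complex.Gamma (-(r : ℂ)) * (x : ℂ) ^ (r : ℂ) := by
      rw [← hV]
      exact setIntegral_congr_fun measurableSet_Ioi fun t ht => (hpt t ht).symm
    have h2 : Complex.Gamma (-(r : ℂ)) * (x : ℂ) ^ (r : ℂ)
        = ((Real.Gamma (-r) * x ^ r : ℝ) : ℂ) := by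
      rw [Complex.ofReal_mul, Complex.ofReal_cpow hx.le, ← Complex.Gamma_ofReal]
      push_cast
      ring_nf
    have h1' : ((∫ t in Ioi (0 : ℝ), t ^ (r - 1) * Real.exp (-(x / t)) : ℝ) : ℂ)
        = ((Real.Gamma (-r) * x ^ r : ℝ) : ℂ) := by
      rw [← h2, ← h1]
      exact integral_ofReal.symm
    exact_mod_cast h1'

/-- For `-1 ≤ p < 0` and `Re ν < 0`, as `x → +∞`:
`F_{p,ν}(x) = Γ(-ν) x^ν - Γ(-p-ν) x^{ν+p} + O(x^{Re ν + 2p})`. -/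
theorem kratzel_asymptotics_neg_p (p : ℝ) (hp₁ : -1 ≤ p) (hp₂ : p < 0)
    (ν : ℂ) (hν : ν.re < 0) :
    (fun x : ℝ =>
      (∫ t in Ioi (0 : ℝ), (t : ℂ) ^ (ν - 1)
          * Complex.exp (-((t ^ p : ℝ) : ℂ) - ((x / t : ℝ) : ℂ)))
        - Complex.Gamma (-ν) * (x : ℂ) ^ ν
        + Complex.Gamma (-(p : ℂ) - ν) * (x : ℂ) ^ (ν + p))
      =O[atTop] (fun x : ℝ => x ^ (ν.re + 2 * p)) := by
  set r : ℝ := ν.re + 2 * p with hr_def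
  have hr : r < 0 := by simp only [hr_def]; linarith
  rw [isBigO_iff]
  refine ⟨Real.Gamma (-r) / 2, ?_⟩
  filter_upwards [eventually_gt_atTop (0 : ℝ)] with x hx
  obtain ⟨h1I, h1V⟩ := mellin_exp_div x hx ν hν
  obtain ⟨h2I, h2V⟩ := mellin_exp_div x hx (ν + p)
    (by simp only [Complex.add_re, Complex.ofReal_re]; linarith)
  obtain ⟨h3I, h3V⟩ := real_exp_div_integral x hx r hr
  set f₃ : ℝ → ℂ := fun t => (t : ℂ) ^ (ν - 1) *
    ((Complex.exp (-((t ^ p : ℝ) : ℂ)) - 1 + ((t ^ p : ℝ) : ℂ))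
      * Complex.exp (-((x / t : ℝ) : ℂ))) with hf₃
  -- bound on the norm of f₃
  have hnorm_bound : ∀ t ∈ Ioi (0 : ℝ),
      ‖f₃ t‖ ≤ 1 / 2 * (t ^ (r - 1) * Real.exp (-(x / t))) := by
    intro t ht
    have ht0 : (0 : ℝ) < t := ht
    have hu : (0 : ℝ) ≤ t ^ p := Real.rpow_nonneg ht0.le p
    have hA : ‖(t : ℂ) ^ (ν - 1)‖ = t ^ (ν.re - 1) := by
      rw [Complex.norm_cpow_eq_rpow_re_of_pos ht0]
      simp
    have hB : ‖Complex.exp (-((t ^ p : ℝ) : ℂ)) - 1 + ((t ^ p : ℝ) : ℂ)‖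
        ≤ (t ^ p) ^ 2 / 2 := by
      have heq : Complex.exp (-((t ^ p : ℝ) : ℂ)) - 1 + ((t ^ p : ℝ) : ℂ)
          = ((Real.exp (-(t ^ p)) - 1 + t ^ p : ℝ) : ℂ) := by
        push_cast [Complex.ofReal_exp]
        ring_nf
      rw [heq, Complex.norm_real, Real.norm_eq_abs, abs_of_nonneg
        (by nlinarith [Real.add_one_le_exp (-(t ^ p))])]
      exact exp_neg_taylor_bound hu
    have hC : ‖Complex.exp (-((x / t : ℝ) : ℂ))‖ = Real.exp (-(x / t)) := by
      rw [Complex.norm_exp]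
      simp
    calc ‖f₃ t‖ = ‖(t : ℂ) ^ (ν - 1)‖
          * (‖Complex.exp (-((t ^ p : ℝ) : ℂ)) - 1 + ((t ^ p : ℝ) : ℂ)‖
            * ‖Complex.exp (-((x / t : ℝ) : ℂ))‖) := by
            simp [hf₃, norm_mul]
      _ ≤ t ^ (ν.re - 1) * (((t ^ p) ^ 2 / 2) * Real.exp (-(x / t))) := by
            rw [hA, hC]
            have h₁ : (0 : ℝ) ≤ t ^ (ν.re - 1) := Real.rpow_nonneg ht0.le _
            have h₂ : (0 : ℝ) ≤ Real.exp (-(x / t)) := (Real.exp_pos _).le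
            exact mul_le_mul_of_nonneg_left
              (mul_le_mul_of_nonneg_right hB h₂) h₁
      _ = 1 / 2 * (t ^ (r - 1) * Real.exp (-(x / t))) := by
            have h1 : (t ^ p) ^ 2 = t ^ (2 * p) := by
              rw [sq, ← Real.rpow_add ht0]; ring_nf
            have h2 : t ^ (ν.re - 1) * t ^ (2 * p) = t ^ (r - 1) := by
              rw [← Real.rpow_add ht0, hr_def]; ring_nf
            rw [h1, ← h2]
            ring
  have hbound_ae : ∀ᵐ t ∂(volume.restrict (Ioi (0 : ℝ))),
      ‖f₃ t‖ ≤ 1 / 2 * (t ^ (r - 1) * Real.exp (-(x / t))) :=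
    (ae_restrict_iff' measurableSet_Ioi).mpr (Filter.Eventually.of_forall hnorm_bound)
  have hBint : Integrable (fun t : ℝ => 1 / 2 * (t ^ (r - 1) * Real.exp (-(x / t))))
      (volume.restrict (Ioi (0 : ℝ))) := h3I.const_mul _
  have hmeas : AEStronglyMeasurable f₃ (volume.restrict (Ioi (0 : ℝ))) := by
    apply Measurable.aestronglyMeasurable
    apply Measurable.mul
    · exact (Complex.measurable_ofReal.pow measurable_const)
    · apply Measurable.mul
      · apply Measurable.add
        · apply Measurable.sub
          · exact Complex.measurable_exp.comp
              (measurable_neg.comp (Complex.measurable_ofReal.comp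
                (measurable_id.pow measurable_const)))
          · exact measurable_const
        · exact Complex.measurable_ofReal.comp (measurable_id.pow measurable_const)
      · exact Complex.measurable_exp.comp
          (measurable_neg.comp (Complex.measurable_ofReal.comp
            (measurable_const.div measurable_id)))
  have hf3I : IntegrableOn f₃ (Ioi (0 : ℝ)) := hBint.mono' hmeas hbound_ae
  -- splitting of the integral
  have hsplit : (∫ t in Ioi (0 : ℝ), (t : ℂ) ^ (ν - 1)
        * Complex.exp (-((t ^ p : ℝ) : ℂ) - ((x / t : ℝ) : ℂ)))
      = (∫ t in Ioi (0 : ℝ), (t : ℂ) ^ (ν - 1) * Complex.exp (-((x / t : ℝ) : ℂ)))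
        - (∫ t in Ioi (0 : ℝ), (t : ℂ) ^ (ν + (p : ℂ) - 1)
            * Complex.exp (-((x / t : ℝ) : ℂ)))
        + ∫ t in Ioi (0 : ℝ), f₃ t := by
    have hcongr : (∫ t in Ioi (0 : ℝ), (t : ℂ) ^ (ν - 1)
          * Complex.exp (-((t ^ p : ℝ) : ℂ) - ((x / t : ℝ) : ℂ)))
        = ∫ t in Ioi (0 : ℝ),
            ((t : ℂ) ^ (ν - 1) * Complex.exp (-((x / t : ℝ) : ℂ))
              - (t : ℂ) ^ (ν + (p : ℂ) - 1) * Complex.exp (-((x / t : ℝ) : ℂ))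
              + f₃ t) := by
      refine setIntegral_congr_fun measurableSet_Ioi fun t ht => ?_
      have ht0 : (0 : ℝ) < t := ht
      have htne : (t : ℂ) ≠ 0 := Complex.ofReal_ne_zero.mpr ht0.ne'
      have hpow : (t : ℂ) ^ (ν + (p : ℂ) - 1)
          = (t : ℂ) ^ (ν - 1) * ((t ^ p : ℝ) : ℂ) := by
        rw [Complex.ofReal_cpow ht0.le, show ν + (p : ℂ) - 1 = (ν - 1) + (p : ℂ) by ring,
          Complex.cpow_add _ _ htne]
      have hexp : Complex.exp (-((t ^ p : ℝ) : ℂ) - ((x / t : ℝ) : ℂ))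
          = Complex.exp (-((t ^ p : ℝ) : ℂ)) * Complex.exp (-((x / t : ℝ) : ℂ)) := by
        rw [← Complex.exp_add]; ring_nf
      simp only [hf₃, hpow, hexp]
      ring
    have hsubI : Integrable (fun t : ℝ =>
        (t : ℂ) ^ (ν - 1) * Complex.exp (-((x / t : ℝ) : ℂ))
          - (t : ℂ) ^ (ν + (p : ℂ) - 1) * Complex.exp (-((x / t : ℝ) : ℂ)))
        (volume.restrict (Ioi (0 : ℝ))) := h1I.sub h2I
    rw [hcongr, integral_add hsubI hf3I, integral_sub h1I h2I]
  -- conclude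
  have hgamma : Complex.Gamma (-(ν + (p : ℂ))) = Complex.Gamma (-(p : ℂ) - ν) := by
    congr 1; ring
  have hval : (∫ t in Ioi (0 : ℝ), (t : ℂ) ^ (ν - 1)
        * Complex.exp (-((t ^ p : ℝ) : ℂ) - ((x / t : ℝ) : ℂ)))
      - Complex.Gamma (-ν) * (x : ℂ) ^ ν
      + Complex.Gamma (-(p : ℂ) - ν) * (x : ℂ) ^ (ν + p)
      = ∫ t in Ioi (0 : ℝ), f₃ t := by
    rw [hsplit, h1V, h2V, hgamma]
    ring
  rw [hval]
  calc ‖∫ t in Ioi (0 : ℝ), f₃ t‖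
      ≤ ∫ t in Ioi (0 : ℝ), 1 / 2 * (t ^ (r - 1) * Real.exp (-(x / t))) :=
        norm_integral_le_of_norm_le hBint hbound_ae
    _ = 1 / 2 * (Real.Gamma (-r) * x ^ r) := by rw [integral_const_mul, h3V]
    _ ≤ Real.Gamma (-r) / 2 * ‖x ^ r‖ := by
        rw [Real.norm_eq_abs, abs_of_nonneg (Real.rpow_nonneg hx.le r)]
        ring_nf
        exact le_refl _
end

section
/- Let p ≤ −1 and let ν ∈ ℂ with Re(ν) < 0. Then, as x → +∞ through positive reals, F_{p,ν}(x) = Γ(−ν) x^ν + O(x^{Re(ν)+p}); i.e. F_{p,ν}(x) − Γ(−ν)x^ν is O(x^{Re(ν)+p}) as x → +∞. -/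
open MeasureTheory Set Filter Asymptotics

-- pointwise substitution identity
lemma aux_pt (ν : ℂ) (x : ℝ) {t : ℝ} (ht : 0 < t) :
    (t : ℝ) ^ ((-1 : ℝ) - 1) • (((t ^ (-1 : ℝ) : ℝ) : ℂ) ^ (-ν - 1)
        * Complex.exp (-((x * t ^ (-1 : ℝ) : ℝ) : ℂ)))
      = (t : ℂ) ^ (ν - 1) * Complex.exp (-((x / t : ℝ) : ℂ)) := by
  have ht0 : (t : ℂ) ≠ 0 := by exact_mod_cast ht.ne'
  have harg : Complex.arg t ≠ Real.pi := by
    rw [Complex.arg_ofReal_of_nonneg ht.le]; exact Real.pi_ne_zero.symm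
  rw [Real.rpow_neg_one]
  have h1 : ((t⁻¹ : ℝ) : ℂ) ^ (-ν - 1) = (t : ℂ) ^ (ν + 1) := by
    rw [Complex.ofReal_inv, Complex.inv_cpow _ _ harg, ← Complex.cpow_neg]
    ring_nf
  rw [h1, ← div_eq_mul_inv]
  rw [Complex.real_smul]
  have h2 : ((t ^ ((-1:ℝ) - 1) : ℝ) : ℂ) = (t : ℂ) ^ ((-2 : ℂ)) := by
    rw [Complex.ofReal_cpow ht.le]; norm_num
  rw [h2, ← mul_assoc, ← Complex.cpow_add _ _ ht0]
  ring_nf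

-- integrability in u-space
lemma aux_conv {a : ℂ} (ha : 0 < a.re) {x : ℝ} (hx : 1 ≤ x) :
    IntegrableOn (fun u : ℝ => (u : ℂ) ^ (a - 1) * Complex.exp (-((x * u : ℝ) : ℂ)))
      (Ioi 0) := by
  refine Integrable.mono (Complex.GammaIntegral_convergent ha) ?_ ?_
  · apply ContinuousOn.aestronglyMeasurable ?_ measurableSet_Ioi
    apply ContinuousOn.mul
    · exact fun u hu => ((continuousAt_cpow_const
        (Complex.ofReal_mem_slitPlane.2 hu)).comp
        Complex.continuous_ofReal.continuousAt).continuousWithinAt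
    · exact (Complex.continuous_exp.comp
        ((Complex.continuous_ofReal.comp (continuous_const.mul continuous_id)).neg)).continuousOn
  · rw [ae_restrict_iff' measurableSet_Ioi]
    filter_upwards with u hu
    rw [norm_mul, norm_mul]
    simp only [Complex.norm_cpow_eq_rpow_re_of_pos hu, Complex.norm_exp,
      Complex.norm_real, Real.norm_eq_abs, Complex.neg_re, Complex.ofReal_re]
    rw [abs_of_pos (Real.exp_pos _), mul_comm (Real.exp (-u))]
    gcongr
    · exact Real.rpow_nonneg (le_of_lt hu) _
    · nlinarith [mem_Ioi.mp hu]

lemma aux_eq {ν : ℂ} (hν : ν.re < 0) {x : ℝ} (hx : 0 < x) :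
    ∫ t in Ioi (0 : ℝ), (t : ℂ) ^ (ν - 1) * Complex.exp (-((x / t : ℝ) : ℂ))
      = Complex.Gamma (-ν) * (x : ℂ) ^ ν := by
  have h1 := integral_comp_rpow_Ioi
    (fun u : ℝ => (u : ℂ) ^ (-ν - 1) * Complex.exp (-((x * u : ℝ) : ℂ)))
    (p := -1) (by norm_num)
  have h2 : ∫ t in Ioi (0 : ℝ), (t : ℂ) ^ (ν - 1) * Complex.exp (-((x / t : ℝ) : ℂ))
      = ∫ u in Ioi (0 : ℝ), (u : ℂ) ^ (-ν - 1) * Complex.exp (-((x * u : ℝ) : ℂ)) := by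
    rw [← h1]
    refine setIntegral_congr_fun measurableSet_Ioi (fun t ht => ?_)
    rw [← aux_pt ν x ht]
    simp [abs_of_nonneg]
  rw [h2]
  have h3 : ∫ u in Ioi (0 : ℝ), (u : ℂ) ^ (-ν - 1) * Complex.exp (-((x * u : ℝ) : ℂ))
      = (1 / (x : ℂ)) ^ (-ν) * Complex.Gamma (-ν) := by
    rw [← Complex.integral_cpow_mul_exp_neg_mul_Ioi (by simpa using hν) hx]
    refine setIntegral_congr_fun measurableSet_Ioi (fun u hu => ?_)
    push_cast
    ring_nf
  rw [h3]
  have harg : Complex.arg x ≠ Real.pi := by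
    rw [Complex.arg_ofReal_of_nonneg hx.le]; exact Real.pi_ne_zero.symm
  rw [one_div, Complex.inv_cpow _ _ harg, ← Complex.cpow_neg, neg_neg, mul_comm]

lemma aux_int {ν : ℂ} (hν : ν.re < 0) {x : ℝ} (hx : 1 ≤ x) :
    IntegrableOn (fun t : ℝ => (t : ℂ) ^ (ν - 1) * Complex.exp (-((x / t : ℝ) : ℂ)))
      (Ioi 0) := by
  have h := (integrableOn_Ioi_comp_rpow_iff'
    (fun u : ℝ => (u : ℂ) ^ (-ν - 1) * Complex.exp (-((x * u : ℝ) : ℂ)))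
    (p := -1) (by norm_num)).2 (aux_conv (by simpa using hν) hx)
  refine h.congr_fun (fun t ht => ?_) measurableSet_Ioi
  exact aux_pt ν x ht

lemma aux_eq_real {σ : ℝ} (hσ : σ < 0) {x : ℝ} (hx : 0 < x) :
    ∫ t in Ioi (0 : ℝ), t ^ (σ - 1) * Real.exp (-(x / t))
      = Real.Gamma (-σ) * x ^ σ := by
  have h := aux_eq (ν := (σ : ℂ)) (by simpa using hσ) hx
  have h2 : (∫ t in Ioi (0 : ℝ), (t : ℂ) ^ ((σ : ℂ) - 1) * Complex.exp (-((x / t : ℝ) : ℂ)))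
      = ∫ t in Ioi (0 : ℝ), ((t ^ (σ - 1) * Real.exp (-(x / t)) : ℝ) : ℂ) := by
    refine setIntegral_congr_fun measurableSet_Ioi (fun t ht => ?_)
    rw [Complex.ofReal_mul, Complex.ofReal_exp, Complex.ofReal_cpow ht.le]
    push_cast
    ring
  rw [h2] at h
  rw [show (-(σ : ℂ)) = ((-σ : ℝ) : ℂ) by norm_num, Complex.Gamma_ofReal,
    ← Complex.ofReal_cpow hx.le] at h
  norm_cast at h

/-- For `p ≤ -1` and `Re ν < 0`, as `x → +∞`:
`F_{p,ν}(x) = Γ(-ν) x^ν + O(x^{Re ν + p})`. -/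
theorem kratzel_asymptotics_p_le_neg_one (p : ℝ) (hp : p ≤ -1)
    (ν : ℂ) (hν : ν.re < 0) :
    (fun x : ℝ =>
      (∫ t in Ioi (0 : ℝ), (t : ℂ) ^ (ν - 1)
          * Complex.exp (-((t ^ p : ℝ) : ℂ) - ((x / t : ℝ) : ℂ)))
        - Complex.Gamma (-ν) * (x : ℂ) ^ ν)
      =O[atTop] (fun x : ℝ => x ^ (ν.re + p)) := by
  have hσ : ν.re + p < 0 := by linarith
  rw [isBigO_iff]
  refine ⟨Real.Gamma (-(ν.re + p)), ?_⟩
  filter_upwards [eventually_ge_atTop (1 : ℝ)] with x hx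
  have hx0 : (0 : ℝ) < x := lt_of_lt_of_le one_pos hx
  have hf2 : IntegrableOn
      (fun t : ℝ => (t : ℂ) ^ (ν - 1) * Complex.exp (-((x / t : ℝ) : ℂ))) (Ioi 0) :=
    aux_int hν hx
  have hf1 : IntegrableOn
      (fun t : ℝ => (t : ℂ) ^ (ν - 1)
        * Complex.exp (-((t ^ p : ℝ) : ℂ) - ((x / t : ℝ) : ℂ))) (Ioi 0) := by
    refine Integrable.mono hf2 ?_ ?_
    · apply ContinuousOn.aestronglyMeasurable ?_ measurableSet_Ioi
      refine ContinuousOn.mul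
        (fun t ht => ((continuousAt_cpow_const
          (Complex.ofReal_mem_slitPlane.2 ht)).comp
          Complex.continuous_ofReal.continuousAt).continuousWithinAt) ?_
      refine Complex.continuous_exp.comp_continuousOn (ContinuousOn.sub ?_ ?_)
      · exact fun t ht => (Complex.continuous_ofReal.continuousAt.comp
          (Real.continuousAt_rpow_const t p (Or.inl (ne_of_gt ht)))).continuousWithinAt.neg
      · exact Complex.continuous_ofReal.comp_continuousOn
          (continuousOn_const.div continuousOn_id (fun t ht => ne_of_gt ht))
    · rw [ae_restrict_iff' measurableSet_Ioi]
      filter_upwards with t ht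
      rw [norm_mul, norm_mul]
      gcongr
      rw [Complex.norm_exp, Complex.norm_exp]
      rw [Real.exp_le_exp]
      simp only [Complex.sub_re, Complex.neg_re, Complex.ofReal_re]
      have := Real.rpow_nonneg (le_of_lt ht) p
      linarith
  have key : (∫ t in Ioi (0 : ℝ), (t : ℂ) ^ (ν - 1)
        * Complex.exp (-((t ^ p : ℝ) : ℂ) - ((x / t : ℝ) : ℂ)))
        - Complex.Gamma (-ν) * (x : ℂ) ^ ν
      = ∫ t in Ioi (0 : ℝ), ((t : ℂ) ^ (ν - 1)
          * Complex.exp (-((t ^ p : ℝ) : ℂ) - ((x / t : ℝ) : ℂ))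
        - (t : ℂ) ^ (ν - 1) * Complex.exp (-((x / t : ℝ) : ℂ))) := by
    rw [integral_sub hf1 hf2, ← aux_eq hν hx0]
  rw [key]
  have hg : IntegrableOn
      (fun t : ℝ => t ^ (ν.re + p - 1) * Real.exp (-(x / t))) (Ioi 0) := by
    refine IntegrableOn.congr_fun
      (f := fun t : ℝ => ‖(t : ℂ) ^ (((ν.re + p : ℝ) : ℂ) - 1)
        * Complex.exp (-((x / t : ℝ) : ℂ))‖)
      ((aux_int (ν := ((ν.re + p : ℝ) : ℂ)) (by simpa using hσ) hx).norm)
      (fun t ht => ?_) measurableSet_Ioi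
    simp only
    rw [norm_mul,
      Complex.norm_cpow_eq_rpow_re_of_pos ht, Complex.norm_exp]
    simp
  have hpt : ∀ t ∈ Ioi (0 : ℝ),
      ‖(t : ℂ) ^ (ν - 1) * Complex.exp (-((t ^ p : ℝ) : ℂ) - ((x / t : ℝ) : ℂ))
        - (t : ℂ) ^ (ν - 1) * Complex.exp (-((x / t : ℝ) : ℂ))‖
      ≤ t ^ (ν.re + p - 1) * Real.exp (-(x / t)) := by
    intro t ht
    have ht' : (0 : ℝ) < t := ht
    rw [← mul_sub, norm_mul]
    have e1 : Complex.exp (-((t ^ p : ℝ) : ℂ) - ((x / t : ℝ) : ℂ))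
        - Complex.exp (-((x / t : ℝ) : ℂ))
        = ((Real.exp (-(t ^ p) - x / t) - Real.exp (-(x / t)) : ℝ) : ℂ) := by
      push_cast [Complex.ofReal_exp]
      ring_nf
    rw [e1,
      Complex.norm_cpow_eq_rpow_re_of_pos ht', Complex.norm_real, Real.norm_eq_abs]
    have hb1 : |Real.exp (-(t ^ p) - x / t) - Real.exp (-(x / t))|
        ≤ Real.exp (-(x / t)) * t ^ p := by
      have htp : (0 : ℝ) ≤ t ^ p := Real.rpow_nonneg ht'.le p
      have hsplit : Real.exp (-(t ^ p) - x / t)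
          = Real.exp (-(x / t)) * Real.exp (-(t ^ p)) := by
        rw [← Real.exp_add]; ring_nf
      have hle : Real.exp (-(t ^ p)) ≤ 1 := Real.exp_le_one_iff.2 (by linarith)
      have hge : 1 - t ^ p ≤ Real.exp (-(t ^ p)) := by
        have := Real.add_one_le_exp (-(t ^ p)); linarith
      rw [abs_of_nonpos (by nlinarith [Real.exp_pos (-(x / t))])]
      nlinarith [Real.exp_pos (-(x / t))]
    calc t ^ (ν - 1).re * |Real.exp (-(t ^ p) - x / t) - Real.exp (-(x / t))|
        ≤ t ^ (ν - 1).re * (Real.exp (-(x / t)) * t ^ p) := by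
          gcongr
      _ = (t ^ (ν.re - 1) * t ^ p) * Real.exp (-(x / t)) := by
          rw [show (ν - 1).re = ν.re - 1 by simp]; ring
      _ = t ^ (ν.re + p - 1) * Real.exp (-(x / t)) := by
          rw [← Real.rpow_add ht']; ring_nf
  calc ‖∫ t in Ioi (0 : ℝ), ((t : ℂ) ^ (ν - 1)
          * Complex.exp (-((t ^ p : ℝ) : ℂ) - ((x / t : ℝ) : ℂ))
        - (t : ℂ) ^ (ν - 1) * Complex.exp (-((x / t : ℝ) : ℂ)))‖
      ≤ ∫ t in Ioi (0 : ℝ), t ^ (ν.re + p - 1) * Real.exp (-(x / t)) :=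
        norm_integral_le_of_norm_le hg
          ((ae_restrict_iff' measurableSet_Ioi).2 (Eventually.of_forall hpt))
    _ = Real.Gamma (-(ν.re + p)) * x ^ (ν.re + p) := aux_eq_real hσ hx0
    _ ≤ Real.Gamma (-(ν.re + p)) * ‖x ^ (ν.re + p)‖ := by
        rw [Real.norm_of_nonneg (Real.rpow_nonneg hx0.le _)]
end

section
/- Let p > 0 and a > 0, and let τ_s be the unique solution in (1, ∞) of τ^{p+1} = 1 + aτ. For x > 0 set X = p^(1/(p+1)) x^(p/(p+1)), ν = 1 + aX, and φ''_s = ((p+1)/τ_s + ap)/τ_s². Then, as x → +∞, F_{p,ν}(x) = √(2π/(X φ''_s)) · (x/p)^(ν/(p+1)) · τ_s^{aX} · exp(−(p+1)X/(p τ_s) − aX/p) · (1 + o(1)), where ν varies with x as indicated. -/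
open MeasureTheory Set Filter

set_option maxHeartbeats 2000000

namespace KratzelAux
open Real


noncomputable def phi (p a τ : ℝ) : ℝ := τ ^ p / p + τ⁻¹ - a * Real.log τ

theorem phi_def (p a τ : ℝ) : phi p a τ = τ ^ p / p + τ⁻¹ - a * Real.log τ := rfl
noncomputable def phi' (p a τ : ℝ) : ℝ := τ ^ (p - 1) - (τ ^ 2)⁻¹ - a * τ⁻¹

theorem hasDerivAt_phi (p a : ℝ) (hp : 0 < p) {τ : ℝ} (hτ : 0 < τ) :
    HasDerivAt (phi p a) (phi' p a τ) τ := by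
  have h1 : HasDerivAt (fun τ : ℝ => τ ^ p) (p * τ ^ (p - 1)) τ :=
    Real.hasDerivAt_rpow_const (Or.inl hτ.ne')
  have h2 : HasDerivAt (fun τ : ℝ => τ⁻¹) (-(τ ^ 2)⁻¹) τ := hasDerivAt_inv hτ.ne'
  have h3 : HasDerivAt (fun τ : ℝ => a * Real.log τ) (a * τ⁻¹) τ :=
    (Real.hasDerivAt_log hτ.ne').const_mul a
  have := ((h1.div_const p).add h2).sub h3
  refine this.congr_deriv ?_
  unfold phi'
  field_simp
  ring

theorem phi'_eq (p a : ℝ) {τ : ℝ} (hτ : 0 < τ) :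
    phi' p a τ = (τ ^ (p + 1) - 1 - a * τ) / τ ^ 2 := by
  have h1 : τ ^ (p + 1) = τ ^ (p - 1) * τ ^ 2 := by
    rw [← Real.rpow_two, ← Real.rpow_add hτ]
    ring_nf
  rw [phi', h1]
  have h2 : (τ:ℝ) ^ 2 ≠ 0 := by positivity
  field_simp

theorem g_pos (p a τs : ℝ) (hp : 0 < p) (ha : 0 < a) (hτ1 : 1 < τs)
    (hτ2 : τs ^ (p + 1) = 1 + a * τs) {τ : ℝ} (hτ : τs < τ) :
    0 < τ ^ (p + 1) - 1 - a * τ := by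
  have hτs0 : (0:ℝ) < τs := lt_trans one_pos hτ1
  have hτ0 : (0:ℝ) < τ := lt_trans hτs0 hτ
  have ht : τs / τ ∈ Ioo (0:ℝ) 1 := ⟨by positivity, (div_lt_one hτ0).2 hτ⟩
  have hconv := (strictConvexOn_rpow (by linarith : (1:ℝ) < p + 1)).2
    (mem_Ici.2 le_rfl) (mem_Ici.2 hτ0.le) hτ0.ne
    (by linarith [ht.2] : (0:ℝ) < 1 - τs / τ) ht.1 (by ring)
  simp only [smul_eq_mul, mul_zero, zero_add] at hconv
  rw [Real.zero_rpow (by linarith : p + 1 ≠ 0)] at hconv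
  have h1 : τs / τ * τ = τs := div_mul_cancel₀ _ hτ0.ne'
  rw [h1, hτ2, mul_zero, zero_add] at hconv
  have key : (1 + a * τs) * (τ / τs) < τ ^ (p + 1) := by
    have hmul := mul_lt_mul_of_pos_right hconv (show (0:ℝ) < τ / τs by positivity)
    calc (1 + a * τs) * (τ / τs) < τs / τ * τ ^ (p + 1) * (τ / τs) := hmul
      _ = τ ^ (p + 1) := by field_simp
  have expand : (1 + a * τs) * (τ / τs) = τ / τs + a * τ := by field_simp
  have h3 : (1:ℝ) < τ / τs := (one_lt_div hτs0).2 hτ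
  rw [expand] at key
  linarith

theorem g_neg (p a τs : ℝ) (hp : 0 < p) (ha : 0 < a) (hτ1 : 1 < τs)
    (hτ2 : τs ^ (p + 1) = 1 + a * τs) {τ : ℝ} (hτ0 : 0 < τ) (hτ : τ < τs) :
    τ ^ (p + 1) - 1 - a * τ < 0 := by
  have hτs0 : (0:ℝ) < τs := lt_trans one_pos hτ1
  have ht : τ / τs ∈ Ioo (0:ℝ) 1 := ⟨by positivity, (div_lt_one hτs0).2 hτ⟩
  have hconv := (strictConvexOn_rpow (by linarith : (1:ℝ) < p + 1)).2
    (mem_Ici.2 le_rfl) (mem_Ici.2 hτs0.le) hτs0.ne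
    (by linarith [ht.2] : (0:ℝ) < 1 - τ / τs) ht.1 (by ring)
  simp only [smul_eq_mul, mul_zero, zero_add] at hconv
  rw [Real.zero_rpow (by linarith : p + 1 ≠ 0)] at hconv
  have h1 : τ / τs * τs = τ := div_mul_cancel₀ _ hτs0.ne'
  rw [h1, hτ2, mul_zero, zero_add] at hconv
  -- hconv : τ ^ (p+1) < τ/τs * (1 + a*τs)
  have h2 : τ / τs * (1 + a * τs) < 1 + a * τ := by
    have h3 : τ / τs < 1 := ht.2
    have : τ / τs * (1 + a * τs) = τ / τs + a * τ := by field_simp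
    rw [this]
    linarith
  linarith

section
variable (p a τs : ℝ) (hp : 0 < p) (ha : 0 < a) (hτ1 : 1 < τs)
  (hτ2 : τs ^ (p + 1) = 1 + a * τs)

theorem continuousOn_phi' (hp : 0 < p) : ContinuousOn (phi p a) (Ioi 0) := fun τ hτ =>
  (hasDerivAt_phi p a hp (mem_Ioi.1 hτ)).continuousAt.continuousWithinAt

include hp ha hτ1 hτ2

theorem strictMonoOn_phi : StrictMonoOn (phi p a) (Ici τs) := by
  have hτs0 : (0:ℝ) < τs := lt_trans one_pos hτ1
  apply strictMonoOn_of_deriv_pos (convex_Ici τs)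
  · exact (continuousOn_phi' p a hp).mono fun τ hτ => lt_of_lt_of_le hτs0 hτ
  · intro τ hτ
    rw [interior_Ici] at hτ
    have hτ0 : (0:ℝ) < τ := lt_trans hτs0 hτ
    rw [(hasDerivAt_phi p a hp hτ0).deriv, phi'_eq p a hτ0]
    exact div_pos (g_pos p a τs hp ha hτ1 hτ2 hτ) (by positivity)

theorem strictAntiOn_phi : StrictAntiOn (phi p a) (Ioc 0 τs) := by
  apply strictAntiOn_of_deriv_neg (convex_Ioc 0 τs)
  · exact (continuousOn_phi' p a hp).mono Ioc_subset_Ioi_self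
  · intro τ hτ
    rw [interior_Ioc] at hτ
    rw [(hasDerivAt_phi p a hp hτ.1).deriv, phi'_eq p a hτ.1]
    exact div_neg_of_neg_of_pos (g_neg p a τs hp ha hτ1 hτ2 hτ.1 hτ.2) (pow_pos hτ.1 2)

theorem psi_nonneg {τ : ℝ} (hτ : 0 < τ) : 0 ≤ phi p a τ - phi p a τs := by
  have hτs0 : (0:ℝ) < τs := lt_trans one_pos hτ1
  rcases lt_trichotomy τ τs with h | h | h
  · have := strictAntiOn_phi p a τs hp ha hτ1 hτ2 ⟨hτ, h.le⟩ ⟨hτs0, le_rfl⟩ h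
    linarith
  · simp [h]
  · have := strictMonoOn_phi p a τs hp ha hτ1 hτ2 (mem_Ici.2 le_rfl) (mem_Ici.2 h.le) h
    linarith

theorem psi_pos_of_ge {τ : ℝ} (hτ : τs < τ) : 0 < phi p a τ - phi p a τs := by
  have := strictMonoOn_phi p a τs hp ha hτ1 hτ2 (mem_Ici.2 le_rfl) (mem_Ici.2 hτ.le) hτ
  linarith

theorem psi_pos_of_le {τ : ℝ} (hτ0 : 0 < τ) (hτ : τ < τs) : 0 < phi p a τ - phi p a τs := by
  have hτs0 : (0:ℝ) < τs := lt_trans one_pos hτ1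
  have := strictAntiOn_phi p a τs hp ha hτ1 hτ2 ⟨hτ0, hτ.le⟩ ⟨hτs0, le_rfl⟩ hτ
  linarith

theorem phi'_root : phi' p a τs = 0 := by
  have hτs0 : (0:ℝ) < τs := lt_trans one_pos hτ1
  rw [phi'_eq p a hτs0, hτ2]
  simp [sub_sub]

theorem hasDerivAt_phi' :
    HasDerivAt (phi' p a) (((p + 1) / τs + a * p) / τs ^ 2) τs := by
  have hτs0 : (0:ℝ) < τs := lt_trans one_pos hτ1
  have h1 : HasDerivAt (fun τ : ℝ => τ ^ (p - 1)) ((p - 1) * τs ^ (p - 1 - 1)) τs :=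
    Real.hasDerivAt_rpow_const (Or.inl hτs0.ne')
  have h2 : HasDerivAt (fun τ : ℝ => ((τ:ℝ) ^ 2)⁻¹) (-(2 * τs) / ((τs ^ 2) ^ 2)) τs := by
    have hsq : HasDerivAt (fun τ : ℝ => (τ:ℝ) ^ 2) (2 * τs) τs := by
      simpa using hasDerivAt_pow 2 τs
    exact hsq.inv (by positivity)
  have h3 : HasDerivAt (fun τ : ℝ => a * τ⁻¹) (a * (-(τs ^ 2)⁻¹)) τs :=
    (hasDerivAt_inv hτs0.ne').const_mul a
  have hd := (h1.sub h2).sub h3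
  refine hd.congr_deriv ?_
  -- algebra: (p-1) * τs^(p-2) + 2τs/(τs²)² + a/τs² = ((p+1)/τs + a p)/τs²
  have hpow : τs ^ (p - 1 - 1) = (1 + a * τs) / τs ^ 3 := by
    have h5 : τs ^ (p - 1 - 1) = τs ^ (p + 1) / τs ^ (3:ℕ) := by
      rw [← Real.rpow_natCast τs 3, ← Real.rpow_sub hτs0]
      ring_nf
    rw [h5, hτ2]
  rw [hpow]
  have h4 : (τs:ℝ) ≠ 0 := hτs0.ne'
  field_simp
  ring


end
-- integrability of x^s * exp(-b x^p) on (0,∞) for p>0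
theorem int_rpow_exp {p s b : ℝ} (hp : 0 < p) (hs : -1 < s) (hb : 0 < b) :
    IntegrableOn (fun x : ℝ => x ^ s * Real.exp (-b * x ^ p)) (Ioi 0) := by
  have h1 : IntegrableOn (fun y : ℝ => y ^ ((s + 1) / p - 1) * Real.exp (-b * y)) (Ioi 0) := by
    have := integrableOn_rpow_mul_exp_neg_mul_rpow
      (show -1 < (s+1)/p - 1 by
        have : 0 < (s+1)/p := div_pos (by linarith) hp
        linarith) zero_lt_one hb
    simpa using this
  have h2 := (integrableOn_Ioi_comp_rpow_iff'
    (fun y : ℝ => y ^ ((s + 1) / p - 1) * Real.exp (-b * y)) hp.ne').mpr h1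
  apply h2.congr_fun _ measurableSet_Ioi
  intro x hx
  have hx0 : (0:ℝ) < x := hx
  have hxp : x ^ p ≠ 0 := (Real.rpow_pos_of_pos hx0 p).ne'
  simp only [smul_eq_mul]
  rw [← Real.rpow_mul hx0.le p ((s + 1) / p - 1), ← mul_assoc, ← Real.rpow_add hx0]
  have he : p - 1 + p * ((s + 1) / p - 1) = s := by field_simp; ring
  rw [he]

theorem gaussian_trunc_tendsto {k δ : ℝ} (hk : 0 < k) (hδ : 0 < δ) :
    Tendsto (fun l : ℝ => Real.sqrt l * ∫ u in Icc (-δ) δ, Real.exp (-(l * k * u ^ 2)))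
      atTop (nhds (Real.sqrt (π / k))) := by
  have hgi : Integrable (fun v : ℝ => Real.exp (-(k * v ^ 2))) := by
    simpa [neg_mul] using integrable_exp_neg_mul_sq hk
  have hval : (∫ v : ℝ, Real.exp (-(k * v ^ 2))) = Real.sqrt (π / k) := by
    simpa [neg_mul] using integral_gaussian k
  have key : ∀ l : ℝ, 0 < l →
      Real.sqrt l * ∫ u in Icc (-δ) δ, Real.exp (-(l * k * u ^ 2))
        = ∫ v in (Real.sqrt l * (-δ))..(Real.sqrt l * δ), Real.exp (-(k * v ^ 2)) := by
    intro l hl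
    have hsl : 0 < Real.sqrt l := Real.sqrt_pos.2 hl
    have h1 : (∫ u in Icc (-δ) δ, Real.exp (-(l * k * u ^ 2)))
        = ∫ u in (-δ)..δ, Real.exp (-(k * (Real.sqrt l * u) ^ 2)) := by
      rw [intervalIntegral.integral_of_le (by linarith), ← integral_Icc_eq_integral_Ioc]
      refine setIntegral_congr_fun measurableSet_Icc fun u _ => ?_
      congr 1
      rw [mul_pow, Real.sq_sqrt hl.le]
      ring
    rw [h1, ← intervalIntegral.smul_integral_comp_mul_left
      (fun v => Real.exp (-(k * v ^ 2))) (Real.sqrt l)]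
    simp [smul_eq_mul]
  have hlim : Tendsto (fun l : ℝ => ∫ v in (Real.sqrt l * (-δ))..(Real.sqrt l * δ),
      Real.exp (-(k * v ^ 2))) atTop (nhds (Real.sqrt (π / k))) := by
    rw [← hval]
    have hst : Tendsto Real.sqrt atTop atTop := by
      apply (tendsto_rpow_atTop (by norm_num : (0:ℝ) < 1/2)).congr'
      filter_upwards [eventually_ge_atTop (0:ℝ)] with x hx
      rw [Real.sqrt_eq_rpow]
    exact intervalIntegral_tendsto_integral hgi
      (hst.atTop_mul_const_of_neg (by linarith : -δ < 0))
      (hst.atTop_mul_const hδ)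
  refine hlim.congr' ?_
  filter_upwards [eventually_gt_atTop (0:ℝ)] with l hl
  exact (key l hl).symm

theorem continuousOn_dphi (p a : ℝ) : ContinuousOn (phi' p a) (Ioi 0) := by
  intro τ hτ
  have hτ0 : (0:ℝ) < τ := hτ
  apply ContinuousAt.continuousWithinAt
  have c1 : ContinuousAt (fun τ : ℝ => τ ^ (p - 1)) τ :=
    Real.continuousAt_rpow_const τ _ (Or.inl hτ0.ne')
  have c2 : ContinuousAt (fun τ : ℝ => ((τ:ℝ) ^ 2)⁻¹) τ :=
    ((continuous_pow 2).continuousAt).inv₀ (by positivity)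
  have c3 : ContinuousAt (fun τ : ℝ => a * τ⁻¹) τ :=
    (continuousAt_inv₀ hτ0.ne').const_mul a
  exact (c1.sub c2).sub c3

section
variable (p a τs : ℝ) (hp : 0 < p) (ha : 0 < a) (hτ1 : 1 < τs)
  (hτ2 : τs ^ (p + 1) = 1 + a * τs)
include hp ha hτ1 hτ2

/-- Quadratic two-sided bound near the critical point. -/
theorem quad_bound {ε : ℝ} (hε : 0 < ε) :
    ∃ δ : ℝ, 0 < δ ∧ δ < τs ∧ ∀ τ : ℝ, |τ - τs| ≤ δ →
      (((p + 1) / τs + a * p) / τs ^ 2 - ε) / 2 * (τ - τs) ^ 2 ≤ phi p a τ - phi p a τs ∧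
      phi p a τ - phi p a τs ≤ (((p + 1) / τs + a * p) / τs ^ 2 + ε) / 2 * (τ - τs) ^ 2 := by
  set M := ((p + 1) / τs + a * p) / τs ^ 2 with hM
  have hτs0 : (0:ℝ) < τs := lt_trans one_pos hτ1
  -- derivative estimate
  have hder := hasDerivAt_phi' p a τs hp ha hτ1 hτ2
  rw [hasDerivAt_iff_isLittleO] at hder
  have hev := (Asymptotics.isLittleO_iff.1 hder) hε
  rw [Metric.eventually_nhds_iff] at hev
  obtain ⟨δ₀, hδ₀, hbnd⟩ := hev
  refine ⟨min (δ₀ / 2) (τs / 2), by positivity, lt_of_le_of_lt (min_le_right _ _) (by linarith), ?_⟩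
  set δ := min (δ₀ / 2) (τs / 2) with hδdef
  have hδτs : δ ≤ τs / 2 := min_le_right _ _
  -- pointwise bounds on phi'
  have hphib : ∀ s : ℝ, |s - τs| ≤ δ → |phi' p a s - M * (s - τs)| ≤ ε * |s - τs| := by
    intro s hs
    have hd : dist s τs < δ₀ := by
      rw [Real.dist_eq]
      calc |s - τs| ≤ δ := hs
        _ ≤ δ₀ / 2 := min_le_left _ _
        _ < δ₀ := by linarith
    have := hbnd hd
    rw [phi'_root p a τs hp ha hτ1 hτ2] at this
    simpa [Real.norm_eq_abs, smul_eq_mul, sub_zero, mul_comm (s - τs) M, ← hM] using this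
  intro τ hτd
  have hτpos : (0:ℝ) < τ := by
    have h := (abs_le.1 hτd).1
    linarith
  have hlin : ∀ c x y : ℝ, IntervalIntegrable (fun s => c * (s - τs)) volume x y :=
    fun c x y => (Continuous.intervalIntegrable (by continuity) x y)
  have hlinval : ∀ c x y : ℝ, (∫ s in x..y, c * (s - τs))
      = c * ((y - τs) ^ 2 / 2 - (x - τs) ^ 2 / 2) := by
    intro c x y
    rw [intervalIntegral.integral_const_mul]
    have h0 := intervalIntegral.integral_comp_sub_right (fun s : ℝ => s) τs (a := x) (b := y)
    rw [h0, integral_id]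
    ring
  rcases le_total τs τ with hle | hge
  · -- τs ≤ τ
    have hsub : uIcc τs τ ⊆ Ioi 0 := by
      rw [uIcc_of_le hle]
      exact fun s hs => lt_of_lt_of_le hτs0 hs.1
    have hint : IntervalIntegrable (phi' p a) volume τs τ :=
      ((continuousOn_dphi p a).mono hsub).intervalIntegrable
    have hftc : (∫ s in τs..τ, phi' p a s) = phi p a τ - phi p a τs :=
      intervalIntegral.integral_eq_sub_of_hasDerivAt
        (fun s hs => hasDerivAt_phi p a hp (hsub hs)) hint
    have hbd : ∀ s ∈ Icc τs τ, |s - τs| ≤ δ ∧ 0 ≤ s - τs := by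
      intro s hs
      constructor
      · rw [abs_of_nonneg (by linarith [hs.1])]
        have := abs_le.1 hτd
        linarith [hs.2, this.1, this.2]
      · linarith [hs.1]
    have hlow : (∫ s in τs..τ, (M - ε) * (s - τs)) ≤ ∫ s in τs..τ, phi' p a s := by
      apply intervalIntegral.integral_mono_on hle (hlin _ _ _) hint
      intro s hs
      obtain ⟨h1, h2⟩ := hbd s hs
      have := abs_le.1 (hphib s h1)
      rw [abs_of_nonneg h2] at this
      nlinarith [this.1]
    have hhigh : (∫ s in τs..τ, phi' p a s) ≤ ∫ s in τs..τ, (M + ε) * (s - τs) := by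
      apply intervalIntegral.integral_mono_on hle hint (hlin _ _ _)
      intro s hs
      obtain ⟨h1, h2⟩ := hbd s hs
      have := abs_le.1 (hphib s h1)
      rw [abs_of_nonneg h2] at this
      nlinarith [this.2]
    rw [hlinval] at hlow
    rw [hlinval] at hhigh
    rw [hftc] at hlow hhigh
    have e1 : (M - ε) * ((τ - τs) ^ 2 / 2 - (τs - τs) ^ 2 / 2) = (M - ε) / 2 * (τ - τs) ^ 2 := by ring
    have e2 : (M + ε) * ((τ - τs) ^ 2 / 2 - (τs - τs) ^ 2 / 2) = (M + ε) / 2 * (τ - τs) ^ 2 := by ring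
    rw [e1] at hlow; rw [e2] at hhigh
    exact ⟨hlow, hhigh⟩
  · -- τ ≤ τs
    have hsub : uIcc τ τs ⊆ Ioi 0 := by
      rw [uIcc_of_le hge]
      exact fun s hs => lt_of_lt_of_le hτpos hs.1
    have hint : IntervalIntegrable (phi' p a) volume τ τs :=
      ((continuousOn_dphi p a).mono hsub).intervalIntegrable
    have hftc : (∫ s in τ..τs, phi' p a s) = phi p a τs - phi p a τ :=
      intervalIntegral.integral_eq_sub_of_hasDerivAt
        (fun s hs => hasDerivAt_phi p a hp (hsub hs)) hint
    have hbd : ∀ s ∈ Icc τ τs, |s - τs| ≤ δ ∧ s - τs ≤ 0 := by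
      intro s hs
      constructor
      · rw [abs_of_nonpos (by linarith [hs.2])]
        have := abs_le.1 hτd
        linarith [hs.1, this.1]
      · linarith [hs.2]
    have hlow : (∫ s in τ..τs, (M + ε) * (s - τs)) ≤ ∫ s in τ..τs, phi' p a s := by
      apply intervalIntegral.integral_mono_on hge (hlin _ _ _) hint
      intro s hs
      obtain ⟨h1, h2⟩ := hbd s hs
      have := abs_le.1 (hphib s h1)
      rw [abs_of_nonpos h2] at this
      nlinarith [this.1]
    have hhigh : (∫ s in τ..τs, phi' p a s) ≤ ∫ s in τ..τs, (M - ε) * (s - τs) := by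
      apply intervalIntegral.integral_mono_on hge hint (hlin _ _ _)
      intro s hs
      obtain ⟨h1, h2⟩ := hbd s hs
      have := abs_le.1 (hphib s h1)
      rw [abs_of_nonpos h2] at this
      nlinarith [this.2]
    rw [hlinval] at hlow
    rw [hlinval] at hhigh
    rw [hftc] at hlow hhigh
    have e1 : (M + ε) * ((τs - τs) ^ 2 / 2 - (τ - τs) ^ 2 / 2) = -((M + ε) / 2 * (τ - τs) ^ 2) := by ring
    have e2 : (M - ε) * ((τs - τs) ^ 2 / 2 - (τ - τs) ^ 2 / 2) = -((M - ε) / 2 * (τ - τs) ^ 2) := by ring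
    rw [e1] at hlow; rw [e2] at hhigh
    constructor <;> linarith


end
section
variable (p a τs : ℝ) (hp : 0 < p) (ha : 0 < a) (hτ1 : 1 < τs)
  (hτ2 : τs ^ (p + 1) = 1 + a * τs)
include hp ha hτ1 hτ2

theorem exp_phi_bound {τ : ℝ} (hτ : 0 < τ) :
    Real.exp (-phi p a τ) ≤ τ ^ a * Real.exp (-(1/p) * τ ^ p) := by
  have h1 : Real.exp (-phi p a τ)
      = Real.exp (a * Real.log τ) * Real.exp (-(τ ^ p / p)) * Real.exp (-τ⁻¹) := by
    rw [← Real.exp_add, ← Real.exp_add, phi]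
    ring_nf
  rw [h1]
  have h2 : Real.exp (a * Real.log τ) = τ ^ a := by
    rw [Real.rpow_def_of_pos hτ, mul_comm]
  have h3 : Real.exp (-(τ ^ p / p)) = Real.exp (-(1/p) * τ ^ p) := by ring_nf
  rw [h2, h3]
  have h4 : Real.exp (-τ⁻¹) ≤ 1 := Real.exp_le_one_iff.2 (neg_nonpos.2 (inv_nonneg.2 hτ.le))
  calc τ ^ a * Real.exp (-(1/p) * τ ^ p) * Real.exp (-τ⁻¹)
      ≤ τ ^ a * Real.exp (-(1/p) * τ ^ p) * 1 := by
        apply mul_le_mul_of_nonneg_left h4 (by positivity)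
    _ = τ ^ a * Real.exp (-(1/p) * τ ^ p) := by ring

theorem integrable_exp_neg_mul_psi {l : ℝ} (hl : 1 ≤ l) :
    IntegrableOn (fun τ : ℝ => Real.exp (-(l * (phi p a τ - phi p a τs)))) (Ioi 0) := by
  have hmeas : AEStronglyMeasurable
      (fun τ : ℝ => Real.exp (-(l * (phi p a τ - phi p a τs)))) (volume.restrict (Ioi 0)) := by
    apply ContinuousOn.aestronglyMeasurable _ measurableSet_Ioi
    exact (((continuousOn_phi' p a hp).sub continuousOn_const).const_smul l).neg.rexp
  have hg : IntegrableOn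
      (fun τ : ℝ => Real.exp (phi p a τs) * (τ ^ a * Real.exp (-(1/p) * τ ^ p))) (Ioi 0) :=
    (int_rpow_exp hp (by linarith : (-1:ℝ) < a) (by positivity)).const_mul _
  apply hg.mono' hmeas
  rw [ae_restrict_iff' measurableSet_Ioi]
  filter_upwards with τ hτ
  have hτ0 : (0:ℝ) < τ := hτ
  have hψ : 0 ≤ phi p a τ - phi p a τs := psi_nonneg p a τs hp ha hτ1 hτ2 hτ0
  rw [Real.norm_eq_abs, abs_of_pos (Real.exp_pos _)]
  calc Real.exp (-(l * (phi p a τ - phi p a τs)))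
      ≤ Real.exp (-(phi p a τ - phi p a τs)) := by
        apply Real.exp_le_exp.2
        nlinarith
    _ = Real.exp (phi p a τs) * Real.exp (-phi p a τ) := by
        rw [← Real.exp_add]; ring_nf
    _ ≤ Real.exp (phi p a τs) * (τ ^ a * Real.exp (-(1/p) * τ ^ p)) := by
        exact mul_le_mul_of_nonneg_left (exp_phi_bound p a τs hp ha hτ1 hτ2 hτ0)
          (Real.exp_pos _).le


end
section
variable (p a τs : ℝ) (hp : 0 < p) (ha : 0 < a) (hτ1 : 1 < τs)
  (hτ2 : τs ^ (p + 1) = 1 + a * τs)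
include hp ha hτ1 hτ2

theorem laplace_sqrt :
    Tendsto (fun l : ℝ => Real.sqrt l *
        ∫ τ in Ioi 0, Real.exp (-(l * (phi p a τ - phi p a τs))))
      atTop (nhds (Real.sqrt (2 * π / (((p + 1) / τs + a * p) / τs ^ 2)))) := by
  have hτs0 : (0:ℝ) < τs := lt_trans one_pos hτ1
  set M : ℝ := ((p + 1) / τs + a * p) / τs ^ 2 with hMdef
  have hM0 : 0 < M :=
    div_pos (add_pos (div_pos (by linarith) hτs0) (mul_pos ha hp)) (by positivity)
  set L : ℝ := Real.sqrt (2 * π / M) with hLdef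
  rw [Metric.tendsto_nhds]
  intro ε hε
  -- choose ε₂
  have hcont : ContinuousAt (fun t : ℝ => Real.sqrt (2 * π / (M + t))) 0 := by
    apply Real.continuous_sqrt.continuousAt.comp
    exact ContinuousAt.div continuousAt_const (continuousAt_const.add continuousAt_id)
      (by simpa using hM0.ne')
  have hev0 : ∀ᶠ t in nhds (0:ℝ), dist (Real.sqrt (2 * π / (M + t))) L < ε / 4 := by
    have h0 : Real.sqrt (2 * π / (M + 0)) = L := by norm_num [hLdef]
    have := hcont.tendsto
    rw [h0] at this
    exact this (Metric.ball_mem_nhds _ (by linarith))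
  rw [Metric.eventually_nhds_iff] at hev0
  obtain ⟨r, hr, hball⟩ := hev0
  set ε₂ : ℝ := min (r / 2) (M / 2) with hε₂def
  have hε₂0 : 0 < ε₂ := lt_min (by linarith) (by linarith)
  have hε₂M : ε₂ ≤ M / 2 := min_le_right _ _
  have hε₂r : ε₂ < r := lt_of_le_of_lt (min_le_left _ _) (by linarith)
  have hd₁ : dist (Real.sqrt (2 * π / (M - ε₂))) L < ε / 4 := by
    have hdy : dist (-ε₂) (0:ℝ) < r := by
      rw [Real.dist_eq, sub_zero, abs_neg, abs_of_pos hε₂0]; exact hε₂r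
    have := hball hdy
    simpa [sub_eq_add_neg] using this
  have hd₂ : dist (Real.sqrt (2 * π / (M + ε₂))) L < ε / 4 :=
    hball (y := ε₂) (by rw [Real.dist_eq, sub_zero, abs_of_pos hε₂0]; exact hε₂r)
  -- quadratic bounds
  obtain ⟨δ, hδ0, hδτs, hquad⟩ := quad_bound p a τs hp ha hτ1 hτ2 hε₂0
  set k₁ : ℝ := (M - ε₂) / 2 with hk₁def
  set k₂ : ℝ := (M + ε₂) / 2 with hk₂def
  have hk₁0 : 0 < k₁ := by simp only [hk₁def]; linarith
  have hk₂0 : 0 < k₂ := by simp only [hk₂def]; linarith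
  -- tail constant
  have hτmδ : 0 < τs - δ := by linarith
  set c : ℝ := min (phi p a (τs - δ) - phi p a τs) (phi p a (τs + δ) - phi p a τs) with hcdef
  have hc0 : 0 < c := lt_min
    (psi_pos_of_le p a τs hp ha hτ1 hτ2 hτmδ (by linarith))
    (psi_pos_of_ge p a τs hp ha hτ1 hτ2 (by linarith))
  have htailpt : ∀ τ ∈ Ioi (0:ℝ) \ Icc (τs - δ) (τs + δ), c ≤ phi p a τ - phi p a τs := by
    rintro τ ⟨hτ0, hτni⟩
    rw [mem_Icc, not_and_or] at hτni
    rcases hτni with h | h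
    · push_neg at h
      have h2 := strictAntiOn_phi p a τs hp ha hτ1 hτ2
        (show τ ∈ Ioc (0:ℝ) τs from ⟨hτ0, by linarith⟩)
        (show τs - δ ∈ Ioc (0:ℝ) τs from ⟨hτmδ, by linarith⟩) h
      have := min_le_left (phi p a (τs - δ) - phi p a τs) (phi p a (τs + δ) - phi p a τs)
      rw [← hcdef] at this
      linarith
    · push_neg at h
      have h2 := strictMonoOn_phi p a τs hp ha hτ1 hτ2
        (show τs + δ ∈ Ici τs by simp; linarith)
        (show τ ∈ Ici τs by simp; linarith) h
      have := min_le_right (phi p a (τs - δ) - phi p a τs) (phi p a (τs + δ) - phi p a τs)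
      rw [← hcdef] at this
      linarith
  have hK1 : IntegrableOn (fun τ : ℝ => Real.exp (-(phi p a τ - phi p a τs))) (Ioi 0) := by
    have := integrable_exp_neg_mul_psi p a τs hp ha hτ1 hτ2 (le_refl (1:ℝ))
    simpa using this
  set K : ℝ := ∫ τ in Ioi (0:ℝ), Real.exp (-(phi p a τ - phi p a τs)) with hKdef
  -- tail tends to 0
  have htail0 : Tendsto (fun l : ℝ => Real.sqrt l * (Real.exp (-(l - 1) * c) * K))
      atTop (nhds 0) := by
    have h := tendsto_rpow_mul_exp_neg_mul_atTop_nhds_zero (1/2) c hc0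
    have h2 := h.const_mul (Real.exp c * K)
    rw [mul_zero] at h2
    apply h2.congr'
    filter_upwards [eventually_ge_atTop (0:ℝ)] with l hl
    rw [← Real.sqrt_eq_rpow]
    rw [show -(l - 1) * c = c + (-c * l) by ring, Real.exp_add]
    ring
  -- gaussian trunc limit for k₂
  have hπk₂ : Real.sqrt (π / k₂) = Real.sqrt (2 * π / (M + ε₂)) := by
    congr 1
    rw [hk₂def]
    field_simp
  have hgauss := gaussian_trunc_tendsto hk₂0 hδ0
  rw [hπk₂] at hgauss
  -- eventual statement
  have hIccSub : Icc (τs - δ) (τs + δ) ⊆ Ioi (0:ℝ) := fun τ hτ => lt_of_lt_of_le hτmδ hτ.1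
  filter_upwards [eventually_ge_atTop (1:ℝ),
    (Metric.tendsto_nhds.1 htail0) (ε/4) (by linarith),
    (Metric.tendsto_nhds.1 hgauss) (ε/4) (by linarith)] with l hl1 htailev hgaussev
  have hl0 : (0:ℝ) < l := lt_of_lt_of_le one_pos hl1
  have hsl0 : (0:ℝ) ≤ Real.sqrt l := Real.sqrt_nonneg l
  have hIψ := integrable_exp_neg_mul_psi p a τs hp ha hτ1 hτ2 hl1
  -- split the integral
  have hsplit : (∫ τ in Ioi (0:ℝ), Real.exp (-(l * (phi p a τ - phi p a τs))))
      = (∫ τ in Icc (τs - δ) (τs + δ), Real.exp (-(l * (phi p a τ - phi p a τs))))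
      + ∫ τ in Ioi (0:ℝ) \ Icc (τs - δ) (τs + δ), Real.exp (-(l * (phi p a τ - phi p a τs))) := by
    rw [← integral_inter_add_diff measurableSet_Icc hIψ,
      inter_eq_self_of_subset_right hIccSub]
  -- gaussian integrands
  have hg₁int : Integrable (fun τ : ℝ => Real.exp (-(l * k₁ * (τ - τs) ^ 2))) := by
    have : Integrable (fun u : ℝ => Real.exp (-(l * k₁ * u ^ 2))) := by
      simpa [neg_mul] using integrable_exp_neg_mul_sq (mul_pos hl0 hk₁0)
    exact this.comp_sub_right τs
  have hg₂int : Integrable (fun τ : ℝ => Real.exp (-(l * k₂ * (τ - τs) ^ 2))) := by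
    have : Integrable (fun u : ℝ => Real.exp (-(l * k₂ * u ^ 2))) := by
      simpa [neg_mul] using integrable_exp_neg_mul_sq (mul_pos hl0 hk₂0)
    exact this.comp_sub_right τs
  -- near upper bound
  have hnear_ub : (∫ τ in Icc (τs - δ) (τs + δ), Real.exp (-(l * (phi p a τ - phi p a τs))))
      ≤ Real.sqrt (π / (l * k₁)) := by
    have step1 : (∫ τ in Icc (τs - δ) (τs + δ), Real.exp (-(l * (phi p a τ - phi p a τs))))
        ≤ ∫ τ in Icc (τs - δ) (τs + δ), Real.exp (-(l * k₁ * (τ - τs) ^ 2)) := by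
      apply setIntegral_mono_on (hIψ.mono_set hIccSub) (hg₁int.integrableOn) measurableSet_Icc
      intro τ hτ
      apply Real.exp_le_exp.2
      have hq := (hquad τ (by rw [abs_le]; constructor <;> [linarith [hτ.1]; linarith [hτ.2]])).1
      have : k₁ * (τ - τs) ^ 2 ≤ phi p a τ - phi p a τs := by
        rw [hk₁def]; exact hq
      nlinarith
    have step2 : (∫ τ in Icc (τs - δ) (τs + δ), Real.exp (-(l * k₁ * (τ - τs) ^ 2)))
        ≤ ∫ τ : ℝ, Real.exp (-(l * k₁ * (τ - τs) ^ 2)) :=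
      setIntegral_le_integral hg₁int (Filter.Eventually.of_forall fun τ => (Real.exp_pos _).le)
    have hval : (∫ τ : ℝ, Real.exp (-(l * k₁ * (τ - τs) ^ 2))) = Real.sqrt (π / (l * k₁)) := by
      have h1 : (∫ τ : ℝ, Real.exp (-(l * k₁ * (τ - τs) ^ 2)))
          = ∫ u : ℝ, Real.exp (-(l * k₁ * u ^ 2)) :=
        integral_sub_right_eq_self (fun u : ℝ => Real.exp (-(l * k₁ * u ^ 2))) τs
      rw [h1]
      simpa [neg_mul] using integral_gaussian (l * k₁)
    linarith [step1, step2, hval.le, hval.ge]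
  -- near lower bound via shift
  have hshift : (∫ τ in Icc (τs - δ) (τs + δ), Real.exp (-(l * k₂ * (τ - τs) ^ 2)))
      = ∫ u in Icc (-δ) δ, Real.exp (-(l * k₂ * u ^ 2)) := by
    rw [integral_Icc_eq_integral_Ioc, integral_Icc_eq_integral_Ioc,
      ← intervalIntegral.integral_of_le (by linarith : τs - δ ≤ τs + δ),
      ← intervalIntegral.integral_of_le (by linarith : -δ ≤ δ)]
    have h0 := intervalIntegral.integral_comp_sub_right
      (a := τs - δ) (b := τs + δ) (fun u : ℝ => Real.exp (-(l * k₂ * u ^ 2))) τs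
    rw [h0]
    norm_num
  have hnear_lb : (∫ u in Icc (-δ) δ, Real.exp (-(l * k₂ * u ^ 2)))
      ≤ ∫ τ in Icc (τs - δ) (τs + δ), Real.exp (-(l * (phi p a τ - phi p a τs))) := by
    rw [← hshift]
    apply setIntegral_mono_on (hg₂int.integrableOn) (hIψ.mono_set hIccSub) measurableSet_Icc
    intro τ hτ
    apply Real.exp_le_exp.2
    have hq := (hquad τ (by rw [abs_le]; constructor <;> [linarith [hτ.1]; linarith [hτ.2]])).2
    have : phi p a τ - phi p a τs ≤ k₂ * (τ - τs) ^ 2 := by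
      rw [hk₂def]; exact hq
    nlinarith
  -- tail bounds
  have htailset : MeasurableSet (Ioi (0:ℝ) \ Icc (τs - δ) (τs + δ)) :=
    measurableSet_Ioi.diff measurableSet_Icc
  have htail_nonneg : 0 ≤ ∫ τ in Ioi (0:ℝ) \ Icc (τs - δ) (τs + δ),
      Real.exp (-(l * (phi p a τ - phi p a τs))) :=
    setIntegral_nonneg htailset fun τ _ => (Real.exp_pos _).le
  have htail_ub : (∫ τ in Ioi (0:ℝ) \ Icc (τs - δ) (τs + δ),
      Real.exp (-(l * (phi p a τ - phi p a τs)))) ≤ Real.exp (-(l - 1) * c) * K := by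
    have step1 : (∫ τ in Ioi (0:ℝ) \ Icc (τs - δ) (τs + δ),
        Real.exp (-(l * (phi p a τ - phi p a τs))))
        ≤ ∫ τ in Ioi (0:ℝ) \ Icc (τs - δ) (τs + δ),
            Real.exp (-(l - 1) * c) * Real.exp (-(phi p a τ - phi p a τs)) := by
      apply setIntegral_mono_on (hIψ.mono_set diff_subset)
        ((hK1.mono_set diff_subset).const_mul _) htailset
      intro τ hτ
      rw [← Real.exp_add]
      apply Real.exp_le_exp.2
      have hcτ := htailpt τ hτ
      nlinarith
    have step2 : (∫ τ in Ioi (0:ℝ) \ Icc (τs - δ) (τs + δ),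
        Real.exp (-(l - 1) * c) * Real.exp (-(phi p a τ - phi p a τs)))
        ≤ Real.exp (-(l - 1) * c) * K := by
      rw [integral_const_mul]
      apply mul_le_mul_of_nonneg_left _ (Real.exp_pos _).le
      exact setIntegral_mono_set hK1
        (Filter.Eventually.of_forall fun τ => (Real.exp_pos _).le)
        (HasSubset.Subset.eventuallyLE diff_subset)
    linarith
  -- assemble
  rw [hsplit, mul_add]
  rw [Real.dist_eq] at htailev hgaussev ⊢
  rw [abs_lt] at htailev hgaussev ⊢
  have habs_tail : Real.sqrt l * (Real.exp (-(l - 1) * c) * K) < ε / 4 := by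
    have h := htailev.2
    rwa [sub_zero] at h
  have hsqval : Real.sqrt l * Real.sqrt (π / (l * k₁)) = Real.sqrt (2 * π / (M - ε₂)) := by
    have key : ∀ A : ℝ, 0 < A →
        Real.sqrt l * Real.sqrt (π / (l * (A / 2))) = Real.sqrt (2 * π / A) := by
      intro A hA
      rw [← Real.sqrt_mul hl0.le]
      congr 1
      have hl' : l ≠ 0 := hl0.ne'
      have hA' : A ≠ 0 := hA.ne'
      field_simp
    rw [hk₁def]
    exact key (M - ε₂) (by linarith)
  have hub : Real.sqrt l * (∫ τ in Icc (τs - δ) (τs + δ),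
        Real.exp (-(l * (phi p a τ - phi p a τs))))
      ≤ Real.sqrt (2 * π / (M - ε₂)) := by
    rw [← hsqval]
    exact mul_le_mul_of_nonneg_left hnear_ub hsl0
  have hlb : Real.sqrt l * (∫ u in Icc (-δ) δ, Real.exp (-(l * k₂ * u ^ 2)))
      ≤ Real.sqrt l * ∫ τ in Icc (τs - δ) (τs + δ),
        Real.exp (-(l * (phi p a τ - phi p a τs))) :=
    mul_le_mul_of_nonneg_left hnear_lb hsl0
  have htail_ub' : Real.sqrt l * (∫ τ in Ioi (0:ℝ) \ Icc (τs - δ) (τs + δ),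
      Real.exp (-(l * (phi p a τ - phi p a τs)))) ≤ Real.sqrt l * (Real.exp (-(l - 1) * c) * K) :=
    mul_le_mul_of_nonneg_left htail_ub hsl0
  have htail_nonneg' : 0 ≤ Real.sqrt l * (∫ τ in Ioi (0:ℝ) \ Icc (τs - δ) (τs + δ),
      Real.exp (-(l * (phi p a τ - phi p a τs)))) := mul_nonneg hsl0 htail_nonneg
  have hd₁' : -(ε/4) < Real.sqrt (2 * π / (M - ε₂)) - L
      ∧ Real.sqrt (2 * π / (M - ε₂)) - L < ε/4 := by
    rw [Real.dist_eq] at hd₁; exact abs_lt.1 hd₁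
  have hd₂' : -(ε/4) < Real.sqrt (2 * π / (M + ε₂)) - L
      ∧ Real.sqrt (2 * π / (M + ε₂)) - L < ε/4 := by
    rw [Real.dist_eq] at hd₂; exact abs_lt.1 hd₂
  constructor
  · -- lower:  -(ε) < S - L
    have := hgaussev.1
    linarith [hlb, htail_nonneg', hd₂'.1]
  · have := hgaussev.2
    linarith [hub, htail_ub', habs_tail, hd₁'.1, hd₁'.2]

end

theorem ratio_tendsto (p a τs : ℝ) (hp : 0 < p) (ha : 0 < a) (hτ1 : 1 < τs)
    (hτ2 : τs ^ (p + 1) = 1 + a * τs) :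
    Tendsto (fun l : ℝ =>
        (∫ τ in Ioi 0, Real.exp (-(l * (phi p a τ - phi p a τs))))
          / Real.sqrt (2 * π / (l * (((p + 1) / τs + a * p) / τs ^ 2))))
      atTop (nhds 1) := by
  have hτs0 : (0:ℝ) < τs := lt_trans one_pos hτ1
  set M : ℝ := ((p + 1) / τs + a * p) / τs ^ 2 with hMdef
  have hM0 : 0 < M :=
    div_pos (add_pos (div_pos (by linarith) hτs0) (mul_pos ha hp)) (by positivity)
  have hLpos : 0 < Real.sqrt (2 * π / M) :=
    Real.sqrt_pos.2 (div_pos (by positivity) hM0)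
  have h := (laplace_sqrt p a τs hp ha hτ1 hτ2).div_const (Real.sqrt (2 * π / M))
  rw [div_self hLpos.ne'] at h
  apply h.congr'
  filter_upwards [eventually_gt_atTop (0:ℝ)] with l hl
  have h1 : 2 * π / (l * M) = (2 * π / M) / l := by
    rw [div_div]; ring_nf
  have hsq : Real.sqrt (2 * π / (l * M)) = Real.sqrt (2 * π / M) / Real.sqrt l := by
    rw [h1, Real.sqrt_div (by positivity) l]
  rw [hsq]
  have hs : Real.sqrt l ≠ 0 := (Real.sqrt_pos.2 hl).ne'
  rw [div_div_eq_mul_div _ (Real.sqrt (2 * π / M)) (Real.sqrt l), mul_comm]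

end KratzelAux

/-- Uniform asymptotics of Krätzel's integral when `ν = 1 + aX` grows with `x`:
for `p > 0`, `a > 0`, with `τ_s ∈ (1,∞)` the root of `τ^{p+1} = 1 + aτ`,
`X = p^(1/(p+1)) x^(p/(p+1))` and `φ''_s = ((p+1)/τ_s + ap)/τ_s²`, one has, as `x → +∞`,
`F_{p,1+aX}(x) ~ √(2π/(X φ''_s)) (x/p)^((1+aX)/(p+1)) τ_s^{aX} exp(-(p+1)X/(pτ_s) - aX/p)`. -/
theorem kratzel_large_nu_asymptotics (p : ℝ) (hp : 0 < p) (a : ℝ) (ha : 0 < a)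
    (τs : ℝ) (hτs₁ : τs ∈ Ioi (1 : ℝ)) (hτs₂ : τs ^ (p + 1) = 1 + a * τs)
    (X : ℝ → ℝ) (hX : ∀ x : ℝ, X x = p ^ (1 / (p + 1)) * x ^ (p / (p + 1)))
    (ν : ℝ → ℝ) (hν : ∀ x : ℝ, ν x = 1 + a * X x)
    (φs'' : ℝ) (hφs'' : φs'' = ((p + 1) / τs + a * p) / τs ^ 2) :
    Tendsto (fun x : ℝ =>
      (∫ t in Ioi (0 : ℝ), t ^ (ν x - 1) * Real.exp (-(t ^ p) - x / t))
        / (Real.sqrt (2 * Real.pi / (X x * φs''))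
            * (x / p) ^ (ν x / (p + 1))
            * τs ^ (a * X x)
            * Real.exp (-(p + 1) * X x / (p * τs) - a * X x / p)))
      atTop (nhds 1) := by
  have hτ1 : 1 < τs := hτs₁
  have hτs0 : (0:ℝ) < τs := lt_trans one_pos hτ1
  have hp1 : (0:ℝ) < p + 1 := by linarith
  have hR := KratzelAux.ratio_tendsto p a τs hp ha hτ1 hτs₂
  have hXtend : Tendsto X atTop atTop := by
    have h1 : Tendsto (fun x : ℝ => x ^ (p / (p + 1))) atTop atTop :=
      tendsto_rpow_atTop (by positivity)
    have h2 := h1.const_mul_atTop (Real.rpow_pos_of_pos hp (1 / (p + 1)))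
    have hfe : X = fun x : ℝ => p ^ (1 / (p + 1)) * x ^ (p / (p + 1)) := funext hX
    rw [hfe]
    exact h2
  have hcomp := hR.comp hXtend
  apply hcomp.congr'
  filter_upwards [eventually_gt_atTop (0:ℝ)] with x hx
  -- notation
  have hXx0 : 0 < X x := by rw [hX x]; positivity
  have hxp : 0 < x / p := div_pos hx hp
  set c : ℝ := (x / p) ^ (1 / (p + 1)) with hcdef
  have hc : 0 < c := Real.rpow_pos_of_pos hxp _
  have hν1 : ν x - 1 = a * X x := by rw [hν x]; ring
  -- c ^ p = X x / p
  have hpq : p ^ (1 / (p + 1)) * p ^ (p / (p + 1)) = p := by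
    rw [← Real.rpow_add hp, show 1 / (p + 1) + p / (p + 1) = 1 by rw [← add_div, add_comm 1 p, div_self hp1.ne'], Real.rpow_one]
  have hcp : c ^ p = X x / p := by
    rw [hcdef, ← Real.rpow_mul hxp.le, show 1 / (p + 1) * p = p / (p + 1) by ring,
      Real.div_rpow hx.le hp.le, hX x]
    rw [div_eq_div_iff (Real.rpow_pos_of_pos hp _).ne' hp.ne']
    calc x ^ (p / (p + 1)) * p = x ^ (p / (p + 1)) * (p ^ (1 / (p + 1)) * p ^ (p / (p + 1))) := by
          rw [hpq]
      _ = p ^ (1 / (p + 1)) * x ^ (p / (p + 1)) * p ^ (p / (p + 1)) := by ring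
  -- x / c = X x
  have hxc : x / c = X x := by
    rw [hcdef, Real.div_rpow hx.le hp.le, hX x]
    rw [div_div_eq_mul_div, div_eq_iff (Real.rpow_pos_of_pos hx _).ne']
    calc x * p ^ (1 / (p + 1))
        = p ^ (1 / (p + 1)) * x ^ (1:ℝ) := by rw [Real.rpow_one]; ring
      _ = p ^ (1 / (p + 1)) * (x ^ (p / (p + 1)) * x ^ (1 / (p + 1))) := by
          rw [← Real.rpow_add hx, show p / (p + 1) + 1 / (p + 1) = 1 by rw [← add_div, div_self hp1.ne']]
      _ = p ^ (1 / (p + 1)) * x ^ (p / (p + 1)) * x ^ (1 / (p + 1)) := by ring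
  -- c ^ ν x
  have hcν : c ^ (ν x) = (x / p) ^ (ν x / (p + 1)) := by
    rw [hcdef, ← Real.rpow_mul hxp.le]
    congr 1
    ring
  -- change of variables
  have hCoV := integral_comp_mul_left_Ioi
    (fun t => t ^ (ν x - 1) * Real.exp (-(t ^ p) - x / t)) 0 hc
  simp only [mul_zero, smul_eq_mul] at hCoV
  have hNum1 : (∫ t in Ioi (0:ℝ), t ^ (ν x - 1) * Real.exp (-(t ^ p) - x / t))
      = c * ∫ τ in Ioi (0:ℝ), (c * τ) ^ (ν x - 1) * Real.exp (-((c * τ) ^ p) - x / (c * τ)) := by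
    rw [hCoV, ← mul_assoc, mul_inv_cancel₀ hc.ne', one_mul]
  -- pointwise identity
  have hpt : ∀ τ ∈ Ioi (0:ℝ), (c * τ) ^ (ν x - 1) * Real.exp (-((c * τ) ^ p) - x / (c * τ))
      = c ^ (ν x - 1) * Real.exp (-(X x * KratzelAux.phi p a τ)) := by
    intro τ hτ
    have hτ0 : (0:ℝ) < τ := hτ
    rw [Real.mul_rpow hc.le hτ0.le, Real.mul_rpow hc.le hτ0.le, hcp]
    have hτpow : τ ^ (ν x - 1) = Real.exp (a * X x * Real.log τ) := by
      rw [Real.rpow_def_of_pos hτ0, hν1]; ring_nf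
    have hxdiv : x / (c * τ) = X x / τ := by
      rw [div_mul_eq_div_div, hxc]
    rw [hτpow, hxdiv, mul_right_comm, mul_assoc, ← Real.exp_add]
    congr 2
    rw [KratzelAux.phi_def]
    field_simp
    ring
  have hNum2 : (∫ τ in Ioi (0:ℝ), (c * τ) ^ (ν x - 1) * Real.exp (-((c * τ) ^ p) - x / (c * τ)))
      = c ^ (ν x - 1) * (Real.exp (-(X x * KratzelAux.phi p a τs))
          * ∫ τ in Ioi (0:ℝ), Real.exp (-(X x * (KratzelAux.phi p a τ - KratzelAux.phi p a τs)))) := by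
    rw [setIntegral_congr_fun measurableSet_Ioi hpt, integral_const_mul]
    congr 1
    have hsplitexp : ∀ τ : ℝ, Real.exp (-(X x * KratzelAux.phi p a τ))
        = Real.exp (-(X x * KratzelAux.phi p a τs)) * Real.exp (-(X x * (KratzelAux.phi p a τ - KratzelAux.phi p a τs))) :=
      fun τ => by rw [← Real.exp_add]; congr 1; ring
    rw [show (fun τ : ℝ => Real.exp (-(X x * KratzelAux.phi p a τ)))
        = fun τ : ℝ => Real.exp (-(X x * KratzelAux.phi p a τs))
            * Real.exp (-(X x * (KratzelAux.phi p a τ - KratzelAux.phi p a τs))) from funext hsplitexp]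
    rw [integral_const_mul]
  -- denominator rearrangement
  have hE : τs ^ (a * X x) * Real.exp (-(p + 1) * X x / (p * τs) - a * X x / p)
      = Real.exp (-(X x * KratzelAux.phi p a τs)) := by
    rw [Real.rpow_def_of_pos hτs0, ← Real.exp_add]
    congr 1
    have hτsp : τs ^ p = (1 + a * τs) / τs := by
      have h2 : τs ^ (p + 1) = τs ^ p * τs := by
        rw [Real.rpow_add hτs0, Real.rpow_one]
      rw [eq_div_iff hτs0.ne', ← h2]
      exact hτs₂
    rw [KratzelAux.phi_def, hτsp]
    field_simp
    ring
  -- assemble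
  simp only [Function.comp_apply]
  rw [hNum1, hNum2, hφs'']
  rw [mul_assoc (Real.sqrt (2 * Real.pi / (X x * (((p + 1) / τs + a * p) / τs ^ 2)))
      * (x / p) ^ (ν x / (p + 1))), hE, ← hcν]
  have hcc : c ^ (ν x) = c * c ^ (ν x - 1) := by
    rw [show ν x = 1 + (ν x - 1) by ring, Real.rpow_add hc, Real.rpow_one]
    ring_nf
  have hkey : c * (c ^ (ν x - 1) * (Real.exp (-(X x * KratzelAux.phi p a τs))
        * ∫ τ in Ioi (0:ℝ), Real.exp (-(X x * (KratzelAux.phi p a τ - KratzelAux.phi p a τs)))))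
      = (c ^ (ν x) * Real.exp (-(X x * KratzelAux.phi p a τs)))
        * ∫ τ in Ioi (0:ℝ), Real.exp (-(X x * (KratzelAux.phi p a τ - KratzelAux.phi p a τs))) := by
    rw [hcc]; ring
  rw [hkey]
  rw [show Real.sqrt (2 * Real.pi / (X x * (((p + 1) / τs + a * p) / τs ^ 2))) * c ^ (ν x)
      * Real.exp (-(X x * KratzelAux.phi p a τs))
      = (c ^ (ν x) * Real.exp (-(X x * KratzelAux.phi p a τs)))
        * Real.sqrt (2 * Real.pi / (X x * (((p + 1) / τs + a * p) / τs ^ 2))) by ring]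
  rw [mul_div_mul_left _ _ (by positivity : c ^ (ν x) * Real.exp (-(X x * KratzelAux.phi p a τs)) ≠ 0)]
end

section
/- Let p > 0, a, b ∈ ℝ, and define J(a,b;z) = ∫₀^1 t^a (1−t)^b e^{zt} exp(−p/(t(1−t))) dt for z ∈ ℂ. Then the integral converges absolutely for every z ∈ ℂ and satisfies the Kummer-type transformation J(a,b;z) = e^z · J(b,a;−z). -/
open MeasureTheory Set Filter

private lemma aux_tendsto (p a : ℝ) (hp : 0 < p) :
    Tendsto (fun t : ℝ => t ^ a * Real.exp (-p / t)) (nhdsWithin 0 (Ioi 0)) (nhds 0) := by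
  have h1 := tendsto_rpow_mul_exp_neg_mul_atTop_nhds_zero (-a) p hp
  have h2 : Tendsto (fun t : ℝ => t⁻¹) (nhdsWithin 0 (Ioi 0)) atTop := tendsto_inv_nhdsGT_zero
  refine (h1.comp h2).congr' ?_
  filter_upwards [self_mem_nhdsWithin] with t (ht : 0 < t)
  have h0 : (0:ℝ) ≤ t⁻¹ := inv_nonneg.2 ht.le
  simp only [Function.comp]
  rw [Real.rpow_neg h0, Real.inv_rpow ht.le, inv_inv, div_eq_mul_inv]

private lemma aux_bound (p a : ℝ) (hp : 0 < p) :
    ∃ C : ℝ, 0 ≤ C ∧ ∀ t ∈ Ioc (0:ℝ) 1, t ^ a * Real.exp (-p / t) ≤ C := by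
  have h := aux_tendsto p a hp
  have h1 : ∀ᶠ t in nhdsWithin 0 (Ioi (0:ℝ)), t ^ a * Real.exp (-p / t) < 1 := by
    have := h.eventually (eventually_lt_nhds (show (0:ℝ) < 1 by norm_num))
    exact this
  rw [eventually_nhdsWithin_iff, Metric.eventually_nhds_iff] at h1
  obtain ⟨δ, hδ, hδ1⟩ := h1
  -- on [δ/2 ⊓ 1, 1] use compactness
  set c : ℝ := min (δ/2) 1 with hc
  have hc0 : 0 < c := lt_min (by linarith) one_pos
  have hcont : ContinuousOn (fun t : ℝ => t ^ a * Real.exp (-p / t)) (Icc c 1) := by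
    intro x hx
    have hx0 : x ≠ 0 := ne_of_gt (lt_of_lt_of_le hc0 hx.1)
    exact ((Real.continuousAt_rpow_const x a (Or.inl hx0)).mul
      ((Real.continuous_exp.continuousAt).comp
        ((continuousAt_const.div continuousAt_id hx0)))).continuousWithinAt
  obtain ⟨M, hM⟩ := (isCompact_Icc).exists_bound_of_continuousOn hcont
  refine ⟨max 1 M, le_max_of_le_left one_pos.le, ?_⟩
  intro t ht
  rcases lt_or_ge t c with h' | h'
  · have : t ^ a * Real.exp (-p / t) < 1 := by
      apply hδ1
      · rw [Real.dist_eq, sub_zero, abs_of_pos ht.1]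
        have : c ≤ δ/2 := min_le_left _ _
        linarith
      · exact ht.1
    exact this.le.trans (le_max_left _ _)
  · have := hM t ⟨h', ht.2⟩
    calc t ^ a * Real.exp (-p / t) ≤ ‖t ^ a * Real.exp (-p / t)‖ := le_abs_self _
      _ ≤ M := this
      _ ≤ max 1 M := le_max_right _ _

/-- The integral `J(a,b;z) = ∫₀^1 t^a (1-t)^b e^{zt} exp(-p/(t(1-t))) dt`
converges absolutely for every `z ∈ ℂ` and satisfies `J(a,b;z) = e^z J(b,a;-z)`. -/
theorem extended_confluent_integral (p : ℝ) (hp : 0 < p) (a b : ℝ)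
    (J : ℝ → ℝ → ℂ → ℂ)
    (hJ : ∀ a' b' : ℝ, ∀ z : ℂ, J a' b' z
      = ∫ t in Ioo (0 : ℝ) 1, ((t ^ a' * (1 - t) ^ b' : ℝ) : ℂ)
          * Complex.exp (z * t) * (Real.exp (-p / (t * (1 - t))) : ℂ)) :
    (∀ z : ℂ, IntegrableOn
      (fun t : ℝ => ((t ^ a * (1 - t) ^ b : ℝ) : ℂ)
          * Complex.exp (z * t) * (Real.exp (-p / (t * (1 - t))) : ℂ)) (Ioo 0 1)) ∧
    (∀ z : ℂ, J a b z = Complex.exp z * J b a (-z)) := by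
  -- integrability for arbitrary exponents a', b'
  have key : ∀ (a' b' : ℝ) (z : ℂ), IntegrableOn
      (fun t : ℝ => ((t ^ a' * (1 - t) ^ b' : ℝ) : ℂ)
          * Complex.exp (z * t) * (Real.exp (-p / (t * (1 - t))) : ℂ)) (Ioo 0 1) := by
    intro a' b' z
    obtain ⟨C₁, hC₁0, hC₁⟩ := aux_bound p a' hp
    obtain ⟨C₂, hC₂0, hC₂⟩ := aux_bound p b' hp
    have hmeas : AEStronglyMeasurable
        (fun t : ℝ => ((t ^ a' * (1 - t) ^ b' : ℝ) : ℂ)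
          * Complex.exp (z * t) * (Real.exp (-p / (t * (1 - t))) : ℂ))
        (volume.restrict (Ioo 0 1)) := by
      apply ContinuousOn.aestronglyMeasurable _ measurableSet_Ioo
      intro x hx
      have hx0 : x ≠ 0 := ne_of_gt hx.1
      have hx1 : (1:ℝ) - x ≠ 0 := by have := hx.2; intro h; linarith [sub_eq_zero.mp h]
      have hxx : x * (1 - x) ≠ 0 := mul_ne_zero hx0 hx1
      apply ContinuousWithinAt.mul
      apply ContinuousWithinAt.mul
      · exact (Complex.continuous_ofReal.continuousAt.comp
          (((Real.continuousAt_rpow_const x a' (Or.inl hx0)).mul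
            ((Real.continuousAt_rpow_const (1-x) b' (Or.inl hx1)).comp
              (continuous_const.sub continuous_id).continuousAt)))).continuousWithinAt
      · exact (Complex.continuous_exp.continuousAt.comp
          ((continuous_const.mul Complex.continuous_ofReal).continuousAt)).continuousWithinAt
      · exact (Complex.continuous_ofReal.continuousAt.comp
          ((Real.continuous_exp.continuousAt).comp
            (continuousAt_const.div
              ((continuous_id.mul (continuous_const.sub continuous_id)).continuousAt) hxx))).continuousWithinAt
    refine Integrable.mono' (g := fun _ : ℝ => C₁ * C₂ * Real.exp ‖z‖)
      (integrableOn_const measure_Ioo_lt_top.ne enorm_ne_top) hmeas ?_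
    rw [ae_restrict_iff' measurableSet_Ioo]
    filter_upwards with t ht
    obtain ⟨ht0, ht1⟩ := ht
    have h1t : 0 < 1 - t := by linarith
    have hsplit : -p / (t * (1 - t)) = -p / t + -p / (1 - t) := by
      field_simp; ring
    have ht0' : (0:ℝ) ≤ t ^ a' := Real.rpow_nonneg ht0.le _
    have h1t0' : (0:ℝ) ≤ (1-t) ^ b' := Real.rpow_nonneg h1t.le _
    rw [norm_mul, norm_mul, Complex.norm_real, Complex.norm_real,
      Real.norm_eq_abs, Real.norm_eq_abs, abs_of_nonneg (mul_nonneg ht0' h1t0'),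
      abs_of_nonneg (Real.exp_pos _).le, hsplit, Real.exp_add]
    have hez : ‖Complex.exp (z * t)‖ ≤ Real.exp ‖z‖ := by
      rw [Complex.norm_exp]
      apply Real.exp_le_exp.2
      calc (z * t).re ≤ ‖z * (t:ℂ)‖ := by
            exact Complex.re_le_norm _
        _ = ‖z‖ * |t| := by rw [norm_mul, Complex.norm_real, Real.norm_eq_abs]
        _ ≤ ‖z‖ * 1 := by
            apply mul_le_mul_of_nonneg_left _ (norm_nonneg _)
            rw [abs_of_nonneg ht0.le]; exact ht1.le
        _ = ‖z‖ := mul_one _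
    calc t ^ a' * (1 - t) ^ b' * ‖Complex.exp (z * t)‖ * (Real.exp (-p / t) * Real.exp (-p / (1 - t)))
        = (t ^ a' * Real.exp (-p / t)) * ((1-t) ^ b' * Real.exp (-p / (1-t))) * ‖Complex.exp (z * t)‖ := by ring
      _ ≤ C₁ * C₂ * Real.exp ‖z‖ := by
          apply mul_le_mul _ hez (norm_nonneg _) (mul_nonneg hC₁0 hC₂0)
          apply mul_le_mul (hC₁ t ⟨ht0, ht1.le⟩) (hC₂ (1-t) ⟨h1t, by linarith⟩)
            (mul_nonneg h1t0' (Real.exp_pos _).le) hC₁0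
  refine ⟨key a b, ?_⟩
  intro z
  rw [hJ, hJ]
  -- convert to interval integrals
  have conv : ∀ (f : ℝ → ℂ), ∫ t in Ioo (0:ℝ) 1, f t = ∫ t in (0:ℝ)..1, f t := by
    intro f
    rw [intervalIntegral.integral_of_le (by norm_num : (0:ℝ) ≤ 1),
      MeasureTheory.integral_Ioc_eq_integral_Ioo]
  rw [conv, conv]
  have hcs := intervalIntegral.integral_comp_sub_left
      (fun t : ℝ => ((t ^ a * (1 - t) ^ b : ℝ) : ℂ)
        * Complex.exp (z * t) * (Real.exp (-p / (t * (1 - t))) : ℂ)) 1 (a := 0) (b := 1)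
  simp only [sub_self, sub_zero] at hcs
  rw [← hcs, ← intervalIntegral.integral_const_mul]
  apply intervalIntegral.integral_congr
  intro t _
  have h1 : (1:ℝ) - (1 - t) = t := by ring
  have h2 : (1 - t) * t = t * (1 - t) := by ring
  simp only [h1, h2]
  push_cast
  rw [show z * ((1:ℂ) - t) = z + -z * t by ring, Complex.exp_add]
  ring
end
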